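/- arXiv:1602.07938 — 3 statements merged into one kernel-verified Lean document; each statement's English description precedes it below -/
import Mathlib

section
/- Let 0 < κ < 1 and let w be a weight on ℝ^n in the anisotropic Muckenhoupt class A_1. Then there exists a constant C > 0 such that for every t > 0, every parallelepiped E, and every f ∈ L_{1,κ,a}(w), one has w({x ∈ E : M f(x) > t}) ≤ (C/t)·‖f‖_{L_{1,κ,a}(w)}·w(E)^κ. -/
open MeasureTheory ENNReal Set

noncomputable section

/-- The anisotropic parallelepiped `E(x,t) = {y : |y i - x i| ≤ t ^ (a i)}`. -/
def aniBox {n : ℕ} (a x : Fin n → ℝ) (t : ℝ) : Set (Fin n → ℝ) :=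
  {y | ∀ i, |y i - x i| ≤ t ^ a i}

/-- The weighted measure `w(E) = ∫_E w`. -/
def wMeas {n : ℕ} (w : (Fin n → ℝ) → ℝ) (E : Set (Fin n → ℝ)) : ℝ≥0∞ :=
  ∫⁻ y in E, ENNReal.ofReal (w y)

/-- The weighted anisotropic Morrey norm with `p = 1`:
`‖f‖_{L_{1,κ,a}(w)} = sup_E w(E)^{-κ} ∫_E |f| w` over all parallelepipeds `E`. -/
def morreyNorm1 {n : ℕ} (a : Fin n → ℝ) (w : (Fin n → ℝ) → ℝ) (κ : ℝ)
    (f : (Fin n → ℝ) → ℝ) : ℝ≥0∞ :=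
  ⨆ (x : Fin n → ℝ) (t : ℝ) (_ : 0 < t),
    (∫⁻ y in aniBox a x t, ENNReal.ofReal (|f y| * w y)) /
      wMeas w (aniBox a x t) ^ κ

/-- The anisotropic (centered) maximal operator
`M f (x) = sup_{t > 0} |E(x,t)|⁻¹ ∫_{E(x,t)} |f|`. -/
def maxOp {n : ℕ} (a : Fin n → ℝ) (f : (Fin n → ℝ) → ℝ) (x : Fin n → ℝ) : ℝ≥0∞ :=
  ⨆ (t : ℝ) (_ : 0 < t),
    (∫⁻ y in aniBox a x t, ENNReal.ofReal |f y|) / volume (aniBox a x t)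


namespace AniWeak

variable {n : ℕ}

/-- The "total dimension". -/
def A (a : Fin n → ℝ) : ℝ := ∑ i, a i

/-- Exponent making dilation factors dominate. -/
def M (a : Fin n → ℝ) : ℝ := 1 + ∑ i, (a i)⁻¹

/-- doubling dilation factor -/
def lam (a : Fin n → ℝ) : ℝ := 2 ^ M a

/-- Vitali dilation factor -/
def mu (a : Fin n → ℝ) : ℝ := 2 * 3 ^ M a

/-- volume normalization -/
def Vol (a : Fin n → ℝ) (s : ℝ) : ℝ := ∏ i, 2 * s ^ a i

variable {a : Fin n → ℝ}

lemma M_nonneg (ha : ∀ i, 0 < a i) : 0 ≤ M a := by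
  have : 0 ≤ ∑ i, (a i)⁻¹ := Finset.sum_nonneg fun i _ => inv_nonneg.2 (ha i).le
  simp only [M]; linarith

lemma one_le_M_mul (ha : ∀ i, 0 < a i) (i : Fin n) : 1 ≤ M a * a i := by
  have h1 : (a i)⁻¹ ≤ ∑ j, (a j)⁻¹ :=
    Finset.single_le_sum (f := fun j => (a j)⁻¹) (fun j _ => inv_nonneg.2 (ha j).le)
      (Finset.mem_univ i)
  have h2 : (a i)⁻¹ ≤ M a := by simp only [M]; linarith
  calc (1:ℝ) = (a i)⁻¹ * a i := (inv_mul_cancel₀ (ha i).ne').symm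
    _ ≤ M a * a i := mul_le_mul_of_nonneg_right h2 (ha i).le

lemma one_le_lam (ha : ∀ i, 0 < a i) : 1 ≤ lam a :=
  Real.one_le_rpow one_le_two (M_nonneg ha)

lemma lam_pos (ha : ∀ i, 0 < a i) : 0 < lam a := lt_of_lt_of_le one_pos (one_le_lam ha)

lemma two_le_lam_rpow (ha : ∀ i, 0 < a i) (i : Fin n) : 2 ≤ lam a ^ a i := by
  have : lam a ^ a i = 2 ^ (M a * a i) := by
    rw [lam, ← Real.rpow_mul (by norm_num)]
  rw [this]
  calc (2:ℝ) = 2 ^ (1:ℝ) := (Real.rpow_one 2).symm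
    _ ≤ 2 ^ (M a * a i) := Real.rpow_le_rpow_of_exponent_le one_le_two (one_le_M_mul ha i)

lemma one_le_mu (ha : ∀ i, 0 < a i) : 1 ≤ mu a := by
  have h3 : (1:ℝ) ≤ 3 ^ M a := Real.one_le_rpow (by norm_num) (M_nonneg ha)
  simp only [mu]; nlinarith

lemma mu_rpow (ha : ∀ i, 0 < a i) (i : Fin n) :
    2 * (2:ℝ) ^ a i + 1 ≤ mu a ^ a i := by
  have h2 : (0:ℝ) ≤ 2 := by norm_num
  have h3 : (3:ℝ) ≤ 3 ^ (M a * a i) := by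
    calc (3:ℝ) = 3 ^ (1:ℝ) := (Real.rpow_one 3).symm
      _ ≤ 3 ^ (M a * a i) := Real.rpow_le_rpow_of_exponent_le (by norm_num) (one_le_M_mul ha i)
  have hmu : mu a ^ a i = 2 ^ a i * 3 ^ (M a * a i) := by
    rw [mu, Real.mul_rpow h2 (by positivity), ← Real.rpow_mul (by norm_num)]
  rw [hmu]
  have h1 : (1:ℝ) ≤ 2 ^ a i := Real.one_le_rpow one_le_two (ha i).le
  nlinarith

lemma mem_aniBox_self (ha : ∀ i, 0 < a i) {x : Fin n → ℝ} {s : ℝ} (hs : 0 ≤ s) :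
    x ∈ aniBox a x s := fun i => by
  simpa using Real.rpow_nonneg hs (a i)

lemma aniBox_eq_pi (a x : Fin n → ℝ) (t : ℝ) :
    aniBox a x t = Set.pi Set.univ fun i => Icc (x i - t ^ a i) (x i + t ^ a i) := by
  ext y
  simp only [aniBox, mem_setOf_eq, Set.mem_pi, Set.mem_univ, forall_true_left, mem_Icc]
  exact forall_congr' fun i => by rw [abs_sub_le_iff]; constructor <;> intro h <;>
    constructor <;> linarith [h.1, h.2]

lemma measurableSet_aniBox (a x : Fin n → ℝ) (t : ℝ) : MeasurableSet (aniBox a x t) := by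
  rw [aniBox_eq_pi]
  exact MeasurableSet.univ_pi fun i => measurableSet_Icc

lemma isCompact_aniBox (a x : Fin n → ℝ) (t : ℝ) : IsCompact (aniBox a x t) := by
  rw [aniBox_eq_pi]
  exact isCompact_univ_pi fun i => isCompact_Icc

lemma volume_aniBox (a x : Fin n → ℝ) {t : ℝ} (ht : 0 < t) :
    volume (aniBox a x t) = ENNReal.ofReal (Vol a t) := by
  rw [aniBox_eq_pi, volume_pi_pi, Vol,
    ENNReal.ofReal_prod_of_nonneg (fun i _ => by positivity)]
  congr 1
  ext i
  rw [Real.volume_Icc]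
  congr 1
  have : (0:ℝ) ≤ t ^ a i := Real.rpow_nonneg ht.le _
  ring

lemma Vol_pos (ha : ∀ i, 0 < a i) {t : ℝ} (ht : 0 < t) : 0 < Vol a t :=
  Finset.prod_pos fun i _ => by positivity

lemma Vol_scale (ha : ∀ i, 0 < a i) {c t : ℝ} (hc : 0 < c) (ht : 0 < t) :
    Vol a (c * t) = c ^ A a * Vol a t := by
  rw [Vol, Vol, A, Real.rpow_sum_of_pos hc, ← Finset.prod_mul_distrib]
  refine Finset.prod_congr rfl fun i _ => ?_
  rw [Real.mul_rpow hc.le ht.le]; ring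

/-- triangle-inequality containment -/
lemma aniBox_subset {x x' : Fin n → ℝ} {s u : ℝ}
    (h : ∀ i, s ^ a i + |x i - x' i| ≤ u ^ a i) :
    aniBox a x s ⊆ aniBox a x' u := fun y hy i =>
  calc |y i - x' i| ≤ |y i - x i| + |x i - x' i| := abs_sub_le _ _ _
    _ ≤ s ^ a i + |x i - x' i| := by linarith [hy i]
    _ ≤ u ^ a i := h i

/-- general doubling containment -/
lemma aniBox_subset_lam (ha : ∀ i, 0 < a i) {x y : Fin n → ℝ} {s s' u : ℝ}
    (hs : 0 ≤ s) (hs' : 0 ≤ s') (hu : 0 < u) (h1 : s ≤ u) (h2 : s' ≤ u)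
    (hxy : ∀ i, |x i - y i| ≤ s' ^ a i) :
    aniBox a x s ⊆ aniBox a y (lam a * u) := by
  refine aniBox_subset fun i => ?_
  have e1 : s ^ a i ≤ u ^ a i := Real.rpow_le_rpow hs h1 (ha i).le
  have e2 : s' ^ a i ≤ u ^ a i := Real.rpow_le_rpow hs' h2 (ha i).le
  have e3 : (lam a * u) ^ a i = lam a ^ a i * u ^ a i :=
    Real.mul_rpow (lam_pos ha).le hu.le
  have e4 : 2 * u ^ a i ≤ lam a ^ a i * u ^ a i :=
    mul_le_mul_of_nonneg_right (two_le_lam_rpow ha i) (Real.rpow_nonneg hu.le _)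
  calc s ^ a i + |x i - y i| ≤ u ^ a i + u ^ a i := add_le_add e1 ((hxy i).trans e2)
    _ = 2 * u ^ a i := by ring
    _ ≤ (lam a * u) ^ a i := by rw [e3]; exact e4

/-- Vitali containment -/
lemma aniBox_subset_mu (ha : ∀ i, 0 < a i) {x₁ x₂ p : Fin n → ℝ} {s₁ s₂ : ℝ}
    (h1 : 0 ≤ s₁) (h2 : 0 < s₂) (hle : s₁ ≤ 2 * s₂)
    (hp₁ : p ∈ aniBox a x₁ s₁) (hp₂ : p ∈ aniBox a x₂ s₂) :
    aniBox a x₁ s₁ ⊆ aniBox a x₂ (mu a * s₂) := by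
  refine aniBox_subset fun i => ?_
  have t1 : |x₁ i - x₂ i| ≤ s₁ ^ a i + s₂ ^ a i := by
    calc |x₁ i - x₂ i| ≤ |x₁ i - p i| + |p i - x₂ i| := abs_sub_le _ _ _
      _ ≤ s₁ ^ a i + s₂ ^ a i := by
          have u1 := hp₁ i; have u2 := hp₂ i
          rw [abs_sub_comm] at u1
          exact add_le_add u1 u2
  have t2 : s₁ ^ a i ≤ (2 * s₂) ^ a i := Real.rpow_le_rpow h1 hle (ha i).le
  have t3 : (2 * s₂) ^ a i = 2 ^ a i * s₂ ^ a i := Real.mul_rpow (by norm_num) h2.le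
  have t4 : (mu a * s₂) ^ a i = mu a ^ a i * s₂ ^ a i :=
    Real.mul_rpow (le_trans zero_le_one (one_le_mu ha)) h2.le
  have t5 := mu_rpow ha i
  have t6 : (0:ℝ) ≤ s₂ ^ a i := Real.rpow_nonneg h2.le _
  calc s₁ ^ a i + |x₁ i - x₂ i| ≤ s₁ ^ a i + (s₁ ^ a i + s₂ ^ a i) := by linarith
    _ ≤ 2 * (2 ^ a i * s₂ ^ a i) + s₂ ^ a i := by rw [← t3]; linarith
    _ = (2 * 2 ^ a i + 1) * s₂ ^ a i := by ring
    _ ≤ (mu a * s₂) ^ a i := by rw [t4]; nlinarith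

end AniWeak

namespace AniWeak

variable {n : ℕ} {a : Fin n → ℝ} {w f : (Fin n → ℝ) → ℝ}

lemma wMeas_box_lt_top (hw : LocallyIntegrable w volume) (x : Fin n → ℝ) (s : ℝ) :
    wMeas w (aniBox a x s) < ⊤ := by
  have hi : IntegrableOn w (aniBox a x s) volume :=
    hw.integrableOn_isCompact (isCompact_aniBox a x s)
  refine lt_of_le_of_lt ?_ hi.2
  exact lintegral_mono fun y => Real.ofReal_le_enorm (w y)

lemma wMeas_box_pos (hw : LocallyIntegrable w volume) (hwpos : ∀ x, 0 < w x)
    (ha : ∀ i, 0 < a i) (x : Fin n → ℝ) {s : ℝ} (hs : 0 < s) :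
    0 < wMeas w (aniBox a x s) := by
  rcases pos_iff_ne_zero.mp (lt_of_lt_of_le one_pos (le_refl 1)) with _
  by_contra hcon
  push_neg at hcon
  have h0 : wMeas w (aniBox a x s) = 0 := le_antisymm hcon zero_le
  have hmeas : AEMeasurable (fun y => ENNReal.ofReal (w y))
      (volume.restrict (aniBox a x s)) := by
    have hi : IntegrableOn w (aniBox a x s) volume :=
      hw.integrableOn_isCompact (isCompact_aniBox a x s)
    exact ENNReal.measurable_ofReal.comp_aemeasurable hi.aestronglyMeasurable.aemeasurable
  have := (lintegral_eq_zero_iff' hmeas).mp h0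
  have hae : ∀ᵐ y ∂volume.restrict (aniBox a x s), ENNReal.ofReal (w y) = 0 := this
  rw [Filter.eventuallyEq_iff_exists_mem] at this
  have : (volume.restrict (aniBox a x s)) {y | ¬ ENNReal.ofReal (w y) = 0} = 0 := by
    simpa [ae_iff] using hae
  have huniv : {y : Fin n → ℝ | ¬ ENNReal.ofReal (w y) = 0} = Set.univ := by
    ext y; simp [ENNReal.ofReal_eq_zero, not_le, hwpos y]
  rw [huniv, Measure.restrict_apply_univ, volume_aniBox a x hs] at this
  exact absurd this (ne_of_gt (ENNReal.ofReal_pos.mpr (Vol_pos ha hs)))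

lemma lintegral_box_le_maxOp (a : Fin n → ℝ) (g : (Fin n → ℝ) → ℝ)
    (y : Fin n → ℝ) {u : ℝ} (hu : 0 < u) (hvol : volume (aniBox a y u) ≠ 0)
    (hvol' : volume (aniBox a y u) ≠ ⊤) :
    ∫⁻ z in aniBox a y u, ENNReal.ofReal |g z| ≤ maxOp a g y * volume (aniBox a y u) := by
  have hdiv : (∫⁻ z in aniBox a y u, ENNReal.ofReal |g z|) / volume (aniBox a y u) ≤
      maxOp a g y := by
    refine le_trans ?_ (le_iSup _ u)
    exact le_iSup (fun _ : 0 < u => (∫⁻ z in aniBox a y u, ENNReal.ofReal |g z|) /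
      volume (aniBox a y u)) hu
  calc ∫⁻ z in aniBox a y u, ENNReal.ofReal |g z|
      = (∫⁻ z in aniBox a y u, ENNReal.ofReal |g z|) / volume (aniBox a y u) *
        volume (aniBox a y u) := (ENNReal.div_mul_cancel hvol hvol').symm
    _ ≤ maxOp a g y * volume (aniBox a y u) := mul_le_mul_left hdiv _

end AniWeak

namespace AniWeak

variable {n : ℕ} {a : Fin n → ℝ} {w f : (Fin n → ℝ) → ℝ}

lemma wMeas_mono {E F : Set (Fin n → ℝ)} (h : E ⊆ F) : wMeas w E ≤ wMeas w F :=
  lintegral_mono_set h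

lemma key_int (ha : ∀ i, 0 < a i) {C₀ : ℝ} (hC₀ : 0 ≤ C₀)
    (hw : LocallyIntegrable w volume) (hwpos : ∀ x, 0 < w x)
    (hA : ∀ᵐ y ∂(volume : Measure (Fin n → ℝ)), maxOp a w y ≤ ENNReal.ofReal (C₀ * w y))
    (x : Fin n → ℝ) {s c : ℝ} (hs : 0 < s) (hc : 1 ≤ c)
    (g : (Fin n → ℝ) → ℝ≥0∞) :
    wMeas w (aniBox a x (c * s)) * ∫⁻ y in aniBox a x s, g y ≤
      ENNReal.ofReal (C₀ * ((lam a * c) ^ A a * Vol a s)) *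
        ∫⁻ y in aniBox a x s, ENNReal.ofReal (w y) * g y := by
  have hcs : 0 < c * s := mul_pos (lt_of_lt_of_le one_pos hc) hs
  have hlcs : 0 < lam a * (c * s) := mul_pos (lam_pos ha) hcs
  have hVolBig : volume (aniBox a x (c * s)) ≠ ⊤ := by
    rw [volume_aniBox a x hcs]; exact ofReal_ne_top
  have hKfin : wMeas w (aniBox a x (c * s)) ≠ ⊤ := (wMeas_box_lt_top hw x (c * s)).ne
  have hKey : ∀ᵐ y ∂volume.restrict (aniBox a x s),
      wMeas w (aniBox a x (c * s)) * g y ≤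
        ENNReal.ofReal (C₀ * ((lam a * c) ^ A a * Vol a s)) *
          (ENNReal.ofReal (w y) * g y) := by
    have h1 : ∀ᵐ y ∂volume.restrict (aniBox a x s),
        maxOp a w y ≤ ENNReal.ofReal (C₀ * w y) := ae_restrict_of_ae hA
    have h2 : ∀ᵐ y ∂volume.restrict (aniBox a x s), y ∈ aniBox a x s :=
      ae_restrict_mem (measurableSet_aniBox a x s)
    filter_upwards [h1, h2] with y hy hymem
    have hsub : aniBox a x (c * s) ⊆ aniBox a y (lam a * (c * s)) := by
      refine aniBox_subset_lam ha hcs.le hs.le hcs le_rfl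
        (le_mul_of_one_le_left hs.le hc) fun i => ?_
      rw [abs_sub_comm]; exact hymem i
    have e1 : wMeas w (aniBox a x (c * s)) ≤ wMeas w (aniBox a y (lam a * (c * s))) :=
      wMeas_mono hsub
    have e1' : wMeas w (aniBox a y (lam a * (c * s))) =
        ∫⁻ z in aniBox a y (lam a * (c * s)), ENNReal.ofReal |w z| := by
      refine lintegral_congr fun z => ?_
      rw [abs_of_pos (hwpos z)]
    have e2 : ∫⁻ z in aniBox a y (lam a * (c * s)), ENNReal.ofReal |w z| ≤
        maxOp a w y * volume (aniBox a y (lam a * (c * s))) := by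
      refine lintegral_box_le_maxOp a w y hlcs ?_ ?_
      · rw [volume_aniBox a y hlcs]
        exact (ENNReal.ofReal_pos.mpr (Vol_pos ha hlcs)).ne'
      · rw [volume_aniBox a y hlcs]; exact ofReal_ne_top
    have e3 : maxOp a w y * volume (aniBox a y (lam a * (c * s))) ≤
        ENNReal.ofReal (C₀ * w y) * ENNReal.ofReal ((lam a * c) ^ A a * Vol a s) := by
      rw [volume_aniBox a y hlcs, ← mul_assoc (lam a) c s,
        Vol_scale ha (mul_pos (lam_pos ha) (lt_of_lt_of_le one_pos hc)) hs]
      exact mul_le_mul_left hy _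
    have e4 : ENNReal.ofReal (C₀ * w y) * ENNReal.ofReal ((lam a * c) ^ A a * Vol a s) =
        ENNReal.ofReal (C₀ * ((lam a * c) ^ A a * Vol a s)) * ENNReal.ofReal (w y) := by
      rw [ENNReal.ofReal_mul hC₀, ENNReal.ofReal_mul hC₀]
      ring
    have e5 : wMeas w (aniBox a x (c * s)) ≤
        ENNReal.ofReal (C₀ * ((lam a * c) ^ A a * Vol a s)) * ENNReal.ofReal (w y) := by
      rw [← e4]
      exact le_trans e1 (le_trans (le_of_eq e1') (le_trans e2 e3))
    calc wMeas w (aniBox a x (c * s)) * g y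
        ≤ ENNReal.ofReal (C₀ * ((lam a * c) ^ A a * Vol a s)) * ENNReal.ofReal (w y) * g y :=
          mul_le_mul_left e5 _
      _ = ENNReal.ofReal (C₀ * ((lam a * c) ^ A a * Vol a s)) *
          (ENNReal.ofReal (w y) * g y) := by rw [mul_assoc]
  calc wMeas w (aniBox a x (c * s)) * ∫⁻ y in aniBox a x s, g y
      = ∫⁻ y in aniBox a x s, wMeas w (aniBox a x (c * s)) * g y :=
        (lintegral_const_mul' _ _ hKfin).symm
    _ ≤ ∫⁻ y in aniBox a x s, ENNReal.ofReal (C₀ * ((lam a * c) ^ A a * Vol a s)) *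
          (ENNReal.ofReal (w y) * g y) := lintegral_mono_ae hKey
    _ = ENNReal.ofReal (C₀ * ((lam a * c) ^ A a * Vol a s)) *
          ∫⁻ y in aniBox a x s, ENNReal.ofReal (w y) * g y :=
        lintegral_const_mul' _ _ ofReal_ne_top

lemma doubling (ha : ∀ i, 0 < a i) {C₀ : ℝ} (hC₀ : 0 ≤ C₀)
    (hw : LocallyIntegrable w volume) (hwpos : ∀ x, 0 < w x)
    (hA : ∀ᵐ y ∂(volume : Measure (Fin n → ℝ)), maxOp a w y ≤ ENNReal.ofReal (C₀ * w y))
    (x : Fin n → ℝ) {s c : ℝ} (hs : 0 < s) (hc : 1 ≤ c) :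
    wMeas w (aniBox a x (c * s)) ≤
      ENNReal.ofReal (C₀ * (lam a * c) ^ A a) * wMeas w (aniBox a x s) := by
  have h := key_int ha hC₀ hw hwpos hA x hs hc (fun _ => 1)
  simp only [mul_one, setLIntegral_one] at h
  rw [volume_aniBox a x hs] at h
  have hsplit : ENNReal.ofReal (C₀ * ((lam a * c) ^ A a * Vol a s)) =
      ENNReal.ofReal (C₀ * (lam a * c) ^ A a) * ENNReal.ofReal (Vol a s) := by
    rw [← ENNReal.ofReal_mul (mul_nonneg hC₀ (Real.rpow_nonneg
      (mul_nonneg (lam_pos ha).le (le_trans zero_le_one hc)) _))]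
    ring_nf
  rw [hsplit] at h
  have hwe : (∫⁻ y in aniBox a x s, ENNReal.ofReal (w y)) = wMeas w (aniBox a x s) := rfl
  rw [hwe] at h
  have hVne : ENNReal.ofReal (Vol a s) ≠ 0 :=
    (ENNReal.ofReal_pos.mpr (Vol_pos ha hs)).ne'
  refine (ENNReal.mul_le_mul_iff_left hVne ofReal_ne_top).mp ?_
  calc wMeas w (aniBox a x (c * s)) * ENNReal.ofReal (Vol a s) ≤
      ENNReal.ofReal (C₀ * (lam a * c) ^ A a) * ENNReal.ofReal (Vol a s) *
        wMeas w (aniBox a x s) := h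
    _ = ENNReal.ofReal (C₀ * (lam a * c) ^ A a) * wMeas w (aniBox a x s) *
        ENNReal.ofReal (Vol a s) := by ring

lemma level_bound (ha : ∀ i, 0 < a i) {C₀ : ℝ} (hC₀ : 0 ≤ C₀)
    (hw : LocallyIntegrable w volume) (hwpos : ∀ x, 0 < w x)
    (hA : ∀ᵐ y ∂(volume : Measure (Fin n → ℝ)), maxOp a w y ≤ ENNReal.ofReal (C₀ * w y))
    (x : Fin n → ℝ) {s t : ℝ} (hs : 0 < s)
    (hwit : ENNReal.ofReal t * ENNReal.ofReal (Vol a s) ≤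
      ∫⁻ y in aniBox a x s, ENNReal.ofReal |f y|) :
    ENNReal.ofReal t * wMeas w (aniBox a x s) ≤
      ENNReal.ofReal (C₀ * (lam a * 1) ^ A a) *
        ∫⁻ y in aniBox a x s, ENNReal.ofReal (|f y| * w y) := by
  have h := key_int ha hC₀ hw hwpos hA x hs le_rfl (fun y => ENNReal.ofReal |f y|)
  rw [one_mul] at h
  have hint : (∫⁻ y in aniBox a x s, ENNReal.ofReal (w y) * ENNReal.ofReal |f y|) =
      ∫⁻ y in aniBox a x s, ENNReal.ofReal (|f y| * w y) := by
    refine lintegral_congr fun y => ?_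
    rw [ENNReal.ofReal_mul (abs_nonneg _)]
    ring
  rw [hint] at h
  have hsplit : ENNReal.ofReal (C₀ * ((lam a * 1) ^ A a * Vol a s)) =
      ENNReal.ofReal (C₀ * (lam a * 1) ^ A a) * ENNReal.ofReal (Vol a s) := by
    rw [← ENNReal.ofReal_mul (mul_nonneg hC₀ (Real.rpow_nonneg
      (mul_nonneg (lam_pos ha).le zero_le_one) _))]
    ring_nf
  rw [hsplit] at h
  have hVne : ENNReal.ofReal (Vol a s) ≠ 0 :=
    (ENNReal.ofReal_pos.mpr (Vol_pos ha hs)).ne'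
  refine (ENNReal.mul_le_mul_iff_left hVne ofReal_ne_top).mp ?_
  calc ENNReal.ofReal t * wMeas w (aniBox a x s) * ENNReal.ofReal (Vol a s)
      = wMeas w (aniBox a x s) * (ENNReal.ofReal t * ENNReal.ofReal (Vol a s)) := by ring
    _ ≤ wMeas w (aniBox a x s) * ∫⁻ y in aniBox a x s, ENNReal.ofReal |f y| :=
        mul_le_mul_right hwit _
    _ ≤ ENNReal.ofReal (C₀ * (lam a * 1) ^ A a) * ENNReal.ofReal (Vol a s) *
        ∫⁻ y in aniBox a x s, ENNReal.ofReal (|f y| * w y) := h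
    _ = ENNReal.ofReal (C₀ * (lam a * 1) ^ A a) *
        (∫⁻ y in aniBox a x s, ENNReal.ofReal (|f y| * w y)) * ENNReal.ofReal (Vol a s) := by
        ring

lemma morrey_bound {κ : ℝ} (hκ : 0 < κ) (x : Fin n → ℝ) {s : ℝ} (hs : 0 < s)
    (hne : wMeas w (aniBox a x s) ≠ 0) (hnt : wMeas w (aniBox a x s) ≠ ⊤) :
    ∫⁻ y in aniBox a x s, ENNReal.ofReal (|f y| * w y) ≤
      morreyNorm1 a w κ f * wMeas w (aniBox a x s) ^ κ := by
  have hdiv : (∫⁻ y in aniBox a x s, ENNReal.ofReal (|f y| * w y)) /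
      wMeas w (aniBox a x s) ^ κ ≤ morreyNorm1 a w κ f := by
    refine le_trans ?_ (le_iSup _ x)
    refine le_trans ?_ (le_iSup _ s)
    exact le_iSup (fun _ : 0 < s => (∫⁻ y in aniBox a x s, ENNReal.ofReal (|f y| * w y)) /
      wMeas w (aniBox a x s) ^ κ) hs
  have h1 : wMeas w (aniBox a x s) ^ κ ≠ 0 :=
    fun h => hne ((ENNReal.rpow_eq_zero_iff_of_pos hκ).mp h)
  have h2 : wMeas w (aniBox a x s) ^ κ ≠ ⊤ := ENNReal.rpow_ne_top_of_nonneg hκ.le hnt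
  exact (ENNReal.div_le_iff h1 h2).mp hdiv

lemma exists_witness (ha : ∀ i, 0 < a i) {t : ℝ} (ht : 0 < t) {x : Fin n → ℝ}
    (hx : ENNReal.ofReal t < maxOp a f x) :
    ∃ s, 0 < s ∧ ENNReal.ofReal t * ENNReal.ofReal (Vol a s) ≤
      ∫⁻ y in aniBox a x s, ENNReal.ofReal |f y| := by
  rw [maxOp, lt_iSup_iff] at hx
  obtain ⟨s, hs⟩ := hx
  rw [lt_iSup_iff] at hs
  obtain ⟨hspos, hlt⟩ := hs
  refine ⟨s, hspos, ?_⟩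
  rw [volume_aniBox a x hspos] at hlt
  have hVne : ENNReal.ofReal (Vol a s) ≠ 0 :=
    (ENNReal.ofReal_pos.mpr (Vol_pos ha hspos)).ne'
  exact ((ENNReal.lt_div_iff_mul_lt (Or.inl hVne) (Or.inl ofReal_ne_top)).mp hlt).le

end AniWeak

open AniWeak

/-- If `0 < κ < 1` and `w ∈ A_1` (i.e. `M w ≤ C w` a.e. for some `C > 1`), then
there is `C > 0` such that for all `t > 0`, every parallelepiped `E` and every
`f ∈ L_{1,κ,a}(w)`:
`w({x ∈ E : M f (x) > t}) ≤ (C/t) ‖f‖_{L_{1,κ,a}(w)} w(E)^κ`. -/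
theorem maxOp_weak_type_on_weighted_anisotropic_Morrey
    {n : ℕ} (a : Fin n → ℝ) (ha : ∀ i, 0 < a i) (κ : ℝ)
    (hκ0 : 0 < κ) (hκ1 : κ < 1) (w : (Fin n → ℝ) → ℝ)
    (hw : LocallyIntegrable w volume) (hwpos : ∀ x, 0 < w x)
    (hA1 : ∃ C : ℝ, 1 < C ∧ ∀ᵐ x ∂volume, maxOp a w x ≤ ENNReal.ofReal (C * w x)) :
    ∃ C : ℝ, 0 < C ∧ ∀ t : ℝ, 0 < t → ∀ z : Fin n → ℝ, ∀ r : ℝ, 0 < r →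
      ∀ f : (Fin n → ℝ) → ℝ, Measurable f → morreyNorm1 a w κ f < ⊤ →
      wMeas w {x ∈ aniBox a z r | ENNReal.ofReal t < maxOp a f x} ≤
        ENNReal.ofReal (C / t) * morreyNorm1 a w κ f *
          wMeas w (aniBox a z r) ^ κ := by
    classical
  obtain ⟨C₀, hC₀1, hA⟩ := hA1
  have hC₀ : (0:ℝ) ≤ C₀ := le_trans zero_le_one hC₀1.le
  have hAnn : 0 ≤ A a := Finset.sum_nonneg fun i _ => (ha i).le
  have hL1 : 1 ≤ lam a := one_le_lam ha
  have hMu1 : 1 ≤ mu a := one_le_mu ha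
  have hD : ∀ c : ℝ, 1 ≤ c → 1 ≤ C₀ * (lam a * c) ^ A a := by
    intro c hc
    have h1 : (1:ℝ) ≤ lam a * c := by nlinarith
    have h2 : (1:ℝ) ≤ (lam a * c) ^ A a := Real.one_le_rpow h1 hAnn
    nlinarith
  have hD1' : 1 ≤ C₀ * (lam a * 1) ^ A a := hD 1 le_rfl
  have hDL' : 1 ≤ C₀ * (lam a * lam a) ^ A a := hD (lam a) hL1
  have hDM' : 1 ≤ C₀ * (lam a * mu a) ^ A a := hD (mu a) hMu1
  have hP1 : (0:ℝ) < C₀ * (lam a * 1) ^ A a := lt_of_lt_of_le one_pos hD1'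
  have hPL : (0:ℝ) < C₀ * (lam a * lam a) ^ A a := lt_of_lt_of_le one_pos hDL'
  have hPM : (0:ℝ) < C₀ * (lam a * mu a) ^ A a := lt_of_lt_of_le one_pos hDM'
  have hofc : ENNReal.ofReal ((C₀ * (lam a * 1) ^ A a) * (C₀ * (lam a * lam a) ^ A a) *
      (C₀ * (lam a * mu a) ^ A a)) =
      ENNReal.ofReal (C₀ * (lam a * 1) ^ A a) * ENNReal.ofReal (C₀ * (lam a * lam a) ^ A a) *
        ENNReal.ofReal (C₀ * (lam a * mu a) ^ A a) := by
    rw [ENNReal.ofReal_mul (mul_pos hP1 hPL).le, ENNReal.ofReal_mul hP1.le]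
  refine ⟨(C₀ * (lam a * 1) ^ A a) * (C₀ * (lam a * lam a) ^ A a) *
    (C₀ * (lam a * mu a) ^ A a), mul_pos (mul_pos hP1 hPL) hPM, ?_⟩
  intro t ht z r hr f hf hM
  have hwE_fin : wMeas w (aniBox a z r) ≠ ⊤ := (wMeas_box_lt_top hw z r).ne
  have hwE_pos : wMeas w (aniBox a z r) ≠ 0 := (wMeas_box_pos hw hwpos ha z hr).ne'
  set S := {x ∈ aniBox a z r | ENNReal.ofReal t < maxOp a f x} with hSdef
  set N := morreyNorm1 a w κ f with hNdef
  have key : ENNReal.ofReal t * wMeas w S ≤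
      ENNReal.ofReal ((C₀ * (lam a * 1) ^ A a) * (C₀ * (lam a * lam a) ^ A a) *
        (C₀ * (lam a * mu a) ^ A a)) * N * wMeas w (aniBox a z r) ^ κ := by
    by_cases hbig : ∃ x ∈ aniBox a z r, ∃ s, r ≤ s ∧
        ENNReal.ofReal t * ENNReal.ofReal (Vol a s) ≤
          ∫⁻ y in aniBox a x s, ENNReal.ofReal |f y|
    · -- BIG CASE
      obtain ⟨x, hxE, s, hrs, hwit⟩ := hbig
      have hspos : 0 < s := lt_of_lt_of_le hr hrs
      have hwB_fin : wMeas w (aniBox a x s) ≠ ⊤ := (wMeas_box_lt_top hw x s).ne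
      have hwB_pos : wMeas w (aniBox a x s) ≠ 0 := (wMeas_box_pos hw hwpos ha x hspos).ne'
      have h1 : ENNReal.ofReal t * wMeas w (aniBox a x s) ≤
          ENNReal.ofReal (C₀ * (lam a * 1) ^ A a) *
            ∫⁻ y in aniBox a x s, ENNReal.ofReal (|f y| * w y) :=
        level_bound ha hC₀ hw hwpos hA x hspos hwit
      have h2 := morrey_bound (w := w) (f := f) hκ0 x hspos hwB_pos hwB_fin
      have h3 : ENNReal.ofReal t * wMeas w (aniBox a x s) ≤
          ENNReal.ofReal (C₀ * (lam a * 1) ^ A a) * N * wMeas w (aniBox a x s) ^ κ := by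
        refine h1.trans ?_
        calc ENNReal.ofReal (C₀ * (lam a * 1) ^ A a) *
              ∫⁻ y in aniBox a x s, ENNReal.ofReal (|f y| * w y)
            ≤ ENNReal.ofReal (C₀ * (lam a * 1) ^ A a) *
              (N * wMeas w (aniBox a x s) ^ κ) := mul_le_mul_right h2 _
          _ = ENNReal.ofReal (C₀ * (lam a * 1) ^ A a) * N *
              wMeas w (aniBox a x s) ^ κ := by ring
      have hpow_ne : wMeas w (aniBox a x s) ^ κ ≠ 0 :=
        fun h => hwB_pos ((ENNReal.rpow_eq_zero_iff_of_pos hκ0).mp h)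
      have hpow_fin : wMeas w (aniBox a x s) ^ κ ≠ ⊤ :=
        ENNReal.rpow_ne_top_of_nonneg hκ0.le hwB_fin
      have hsplitB : wMeas w (aniBox a x s) =
          wMeas w (aniBox a x s) ^ (1 - κ) * wMeas w (aniBox a x s) ^ κ := by
        rw [← ENNReal.rpow_add _ _ hwB_pos hwB_fin, sub_add_cancel, ENNReal.rpow_one]
      have h4 : ENNReal.ofReal t * wMeas w (aniBox a x s) ^ (1 - κ) ≤
          ENNReal.ofReal (C₀ * (lam a * 1) ^ A a) * N := by
        refine (ENNReal.mul_le_mul_iff_left hpow_ne hpow_fin).mp ?_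
        calc ENNReal.ofReal t * wMeas w (aniBox a x s) ^ (1 - κ) *
              wMeas w (aniBox a x s) ^ κ
            = ENNReal.ofReal t * wMeas w (aniBox a x s) := by rw [mul_assoc, ← hsplitB]
          _ ≤ ENNReal.ofReal (C₀ * (lam a * 1) ^ A a) * N *
              wMeas w (aniBox a x s) ^ κ := h3
      have h5 : wMeas w (aniBox a z r) ≤
          ENNReal.ofReal (C₀ * (lam a * lam a) ^ A a) * wMeas w (aniBox a x s) := by
        have hsub : aniBox a z r ⊆ aniBox a x (lam a * s) := by
          refine aniBox_subset_lam ha hr.le hr.le hspos hrs hrs fun i => ?_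
          rw [abs_sub_comm]; exact hxE i
        exact (wMeas_mono hsub).trans (doubling ha hC₀ hw hwpos hA x hspos hL1)
      have h1κ : (0:ℝ) ≤ 1 - κ := by linarith
      have h6 : wMeas w (aniBox a z r) ^ (1 - κ) ≤
          ENNReal.ofReal (C₀ * (lam a * lam a) ^ A a) *
            wMeas w (aniBox a x s) ^ (1 - κ) := by
        calc wMeas w (aniBox a z r) ^ (1 - κ)
            ≤ (ENNReal.ofReal (C₀ * (lam a * lam a) ^ A a) * wMeas w (aniBox a x s)) ^ (1 - κ) :=
              ENNReal.rpow_le_rpow h5 h1κ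
          _ = ENNReal.ofReal (C₀ * (lam a * lam a) ^ A a) ^ (1 - κ) *
              wMeas w (aniBox a x s) ^ (1 - κ) := ENNReal.mul_rpow_of_nonneg _ _ h1κ
          _ ≤ ENNReal.ofReal (C₀ * (lam a * lam a) ^ A a) *
              wMeas w (aniBox a x s) ^ (1 - κ) := by
              refine mul_le_mul_left ?_ _
              have hone : (1:ℝ≥0∞) ≤ ENNReal.ofReal (C₀ * (lam a * lam a) ^ A a) := by
                simpa using ENNReal.ofReal_le_ofReal hDL'
              calc ENNReal.ofReal (C₀ * (lam a * lam a) ^ A a) ^ (1 - κ)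
                  ≤ ENNReal.ofReal (C₀ * (lam a * lam a) ^ A a) ^ (1:ℝ) :=
                    ENNReal.rpow_le_rpow_of_exponent_le hone (by linarith)
                _ = ENNReal.ofReal (C₀ * (lam a * lam a) ^ A a) := ENNReal.rpow_one _
      have hsplitE : wMeas w (aniBox a z r) =
          wMeas w (aniBox a z r) ^ (1 - κ) * wMeas w (aniBox a z r) ^ κ := by
        rw [← ENNReal.rpow_add _ _ hwE_pos hwE_fin, sub_add_cancel, ENNReal.rpow_one]
      have hconst : ENNReal.ofReal (C₀ * (lam a * lam a) ^ A a) *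
          ENNReal.ofReal (C₀ * (lam a * 1) ^ A a) ≤
          ENNReal.ofReal ((C₀ * (lam a * 1) ^ A a) * (C₀ * (lam a * lam a) ^ A a) *
            (C₀ * (lam a * mu a) ^ A a)) := by
        rw [hofc]
        calc ENNReal.ofReal (C₀ * (lam a * lam a) ^ A a) *
              ENNReal.ofReal (C₀ * (lam a * 1) ^ A a)
            = ENNReal.ofReal (C₀ * (lam a * 1) ^ A a) *
              ENNReal.ofReal (C₀ * (lam a * lam a) ^ A a) := mul_comm _ _
          _ ≤ ENNReal.ofReal (C₀ * (lam a * 1) ^ A a) *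
              ENNReal.ofReal (C₀ * (lam a * lam a) ^ A a) *
              ENNReal.ofReal (C₀ * (lam a * mu a) ^ A a) :=
              le_mul_of_one_le_right' (by simpa using ENNReal.ofReal_le_ofReal hDM')
      calc ENNReal.ofReal t * wMeas w S
          ≤ ENNReal.ofReal t * wMeas w (aniBox a z r) :=
            mul_le_mul_right (wMeas_mono (sep_subset _ _)) _
        _ = ENNReal.ofReal t * (wMeas w (aniBox a z r) ^ (1 - κ) *
            wMeas w (aniBox a z r) ^ κ) := by rw [← hsplitE]
        _ ≤ ENNReal.ofReal t * (ENNReal.ofReal (C₀ * (lam a * lam a) ^ A a) *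
            wMeas w (aniBox a x s) ^ (1 - κ) * wMeas w (aniBox a z r) ^ κ) :=
            mul_le_mul_right (mul_le_mul_left h6 _) _
        _ = ENNReal.ofReal (C₀ * (lam a * lam a) ^ A a) *
            (ENNReal.ofReal t * wMeas w (aniBox a x s) ^ (1 - κ)) *
            wMeas w (aniBox a z r) ^ κ := by ring
        _ ≤ ENNReal.ofReal (C₀ * (lam a * lam a) ^ A a) *
            (ENNReal.ofReal (C₀ * (lam a * 1) ^ A a) * N) *
            wMeas w (aniBox a z r) ^ κ :=
            mul_le_mul_left (mul_le_mul_right h4 _) _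
        _ = ENNReal.ofReal (C₀ * (lam a * lam a) ^ A a) *
            ENNReal.ofReal (C₀ * (lam a * 1) ^ A a) * N *
            wMeas w (aniBox a z r) ^ κ := by ring
        _ ≤ ENNReal.ofReal ((C₀ * (lam a * 1) ^ A a) * (C₀ * (lam a * lam a) ^ A a) *
            (C₀ * (lam a * mu a) ^ A a)) * N * wMeas w (aniBox a z r) ^ κ :=
            mul_le_mul_left (mul_le_mul_left hconst _) _
    · -- SMALL CASE
      push_neg at hbig
      have hsel : ∀ x : S, ∃ s, 0 < s ∧ s < r ∧
          ENNReal.ofReal t * ENNReal.ofReal (Vol a s) ≤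
            ∫⁻ y in aniBox a (x : Fin n → ℝ) s, ENNReal.ofReal |f y| := by
        rintro ⟨x, hxE, hxM⟩
        obtain ⟨s, hs, hwit⟩ := exists_witness ha ht hxM
        refine ⟨s, hs, ?_, hwit⟩
        by_contra hcon
        push_neg at hcon
        exact (hbig x hxE s hcon).not_ge hwit
      choose sel hsel1 hsel2 hsel3 using hsel
      obtain ⟨u, -, hu_disj, hu_cov⟩ :=
        Vitali.exists_disjoint_subfamily_covering_enlargement
          (fun j : S => aniBox a (j : Fin n → ℝ) (sel j)) Set.univ sel 2 one_lt_two
          (fun j _ => (hsel1 j).le) r (fun j _ => (hsel2 j).le)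
          (fun j _ => ⟨(j : Fin n → ℝ), mem_aniBox_self ha (hsel1 j).le⟩)
      have hdisj : Pairwise (Function.onFun Disjoint
          fun j : u => aniBox a ((j : S) : Fin n → ℝ) (sel (j : S))) :=
        hu_disj.subtype _ _
      have hcnt : Countable u := by
        have hcc := MeasureTheory.Measure.countable_meas_pos_of_disjoint_iUnion
          (μ := (volume : Measure (Fin n → ℝ)))
          (As := fun j : u => aniBox a ((j : S) : Fin n → ℝ) (sel (j : S)))
          (fun j => measurableSet_aniBox _ _ _) hdisj
        have huniv : {j : u |
            0 < volume (aniBox a ((j : S) : Fin n → ℝ) (sel (j : S)))} = Set.univ := by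
          ext j
          simp only [Set.mem_setOf_eq, Set.mem_univ, iff_true]
          rw [volume_aniBox a _ (hsel1 (j : S))]
          exact ENNReal.ofReal_pos.mpr (Vol_pos ha (hsel1 (j : S)))
        rw [huniv] at hcc
        exact Set.countable_univ_iff.mp hcc
      have hcov : S ⊆ ⋃ j : u, aniBox a ((j : S) : Fin n → ℝ) (mu a * sel (j : S)) := by
        intro x hx
        obtain ⟨b, hbu, hinter, hle⟩ := hu_cov ⟨x, hx⟩ (Set.mem_univ _)
        obtain ⟨p, hp1, hp2⟩ := hinter
        refine Set.mem_iUnion.mpr ⟨⟨b, hbu⟩, ?_⟩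
        have hsub := aniBox_subset_mu ha (hsel1 ⟨x, hx⟩).le (hsel1 b) hle hp1 hp2
        exact hsub (mem_aniBox_self ha (hsel1 ⟨x, hx⟩).le)
      have hstep1 : wMeas w S ≤
          ∑' j : u, wMeas w (aniBox a ((j : S) : Fin n → ℝ) (mu a * sel (j : S))) :=
        (wMeas_mono hcov).trans (lintegral_iUnion_le _ _)
      have hstep2 : ∀ j : u, ENNReal.ofReal t *
          wMeas w (aniBox a ((j : S) : Fin n → ℝ) (mu a * sel (j : S))) ≤
          ENNReal.ofReal (C₀ * (lam a * mu a) ^ A a) *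
            (ENNReal.ofReal (C₀ * (lam a * 1) ^ A a) *
              ∫⁻ y in aniBox a ((j : S) : Fin n → ℝ) (sel (j : S)),
                ENNReal.ofReal (|f y| * w y)) := by
        intro j
        have hd := doubling (w := w) ha hC₀ hw hwpos hA ((j : S) : Fin n → ℝ)
          (hsel1 (j : S)) hMu1
        have hl := level_bound ha hC₀ hw hwpos hA ((j : S) : Fin n → ℝ)
          (hsel1 (j : S)) (hsel3 (j : S))
        calc ENNReal.ofReal t *
            wMeas w (aniBox a ((j : S) : Fin n → ℝ) (mu a * sel (j : S)))
            ≤ ENNReal.ofReal t * (ENNReal.ofReal (C₀ * (lam a * mu a) ^ A a) *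
              wMeas w (aniBox a ((j : S) : Fin n → ℝ) (sel (j : S)))) :=
              mul_le_mul_right hd _
          _ = ENNReal.ofReal (C₀ * (lam a * mu a) ^ A a) *
              (ENNReal.ofReal t *
                wMeas w (aniBox a ((j : S) : Fin n → ℝ) (sel (j : S)))) := by ring
          _ ≤ ENNReal.ofReal (C₀ * (lam a * mu a) ^ A a) *
              (ENNReal.ofReal (C₀ * (lam a * 1) ^ A a) *
                ∫⁻ y in aniBox a ((j : S) : Fin n → ℝ) (sel (j : S)),
                  ENNReal.ofReal (|f y| * w y)) := mul_le_mul_right hl _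
      have hLr : 0 < lam a * r := mul_pos (lt_of_lt_of_le one_pos hL1) hr
      have hsubE : ∀ j : u,
          aniBox a ((j : S) : Fin n → ℝ) (sel (j : S)) ⊆ aniBox a z (lam a * r) := by
        intro j
        refine aniBox_subset_lam ha (hsel1 (j : S)).le hr.le hr (hsel2 (j : S)).le
          le_rfl fun i => ?_
        exact ((j : S) : S).2.1 i
      have hsum : (∑' j : u, ∫⁻ y in aniBox a ((j : S) : Fin n → ℝ) (sel (j : S)),
            ENNReal.ofReal (|f y| * w y)) ≤
          ∫⁻ y in aniBox a z (lam a * r), ENNReal.ofReal (|f y| * w y) := by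
        rw [← lintegral_iUnion (fun j : u => measurableSet_aniBox _ _ _) hdisj]
        exact lintegral_mono_set (Set.iUnion_subset fun j => hsubE j)
      have hwEs_fin : wMeas w (aniBox a z (lam a * r)) ≠ ⊤ :=
        (wMeas_box_lt_top hw z _).ne
      have hwEs_pos : wMeas w (aniBox a z (lam a * r)) ≠ 0 :=
        (wMeas_box_pos hw hwpos ha z hLr).ne'
      have hmor := morrey_bound (w := w) (f := f) hκ0 z hLr hwEs_pos hwEs_fin
      have hEsk : wMeas w (aniBox a z (lam a * r)) ^ κ ≤
          ENNReal.ofReal (C₀ * (lam a * lam a) ^ A a) * wMeas w (aniBox a z r) ^ κ := by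
        have hdE := doubling (w := w) ha hC₀ hw hwpos hA z hr hL1
        calc wMeas w (aniBox a z (lam a * r)) ^ κ
            ≤ (ENNReal.ofReal (C₀ * (lam a * lam a) ^ A a) * wMeas w (aniBox a z r)) ^ κ :=
              ENNReal.rpow_le_rpow hdE hκ0.le
          _ = ENNReal.ofReal (C₀ * (lam a * lam a) ^ A a) ^ κ *
              wMeas w (aniBox a z r) ^ κ := ENNReal.mul_rpow_of_nonneg _ _ hκ0.le
          _ ≤ ENNReal.ofReal (C₀ * (lam a * lam a) ^ A a) *
              wMeas w (aniBox a z r) ^ κ := by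
              refine mul_le_mul_left ?_ _
              have hone : (1:ℝ≥0∞) ≤ ENNReal.ofReal (C₀ * (lam a * lam a) ^ A a) := by
                simpa using ENNReal.ofReal_le_ofReal hDL'
              calc ENNReal.ofReal (C₀ * (lam a * lam a) ^ A a) ^ κ
                  ≤ ENNReal.ofReal (C₀ * (lam a * lam a) ^ A a) ^ (1:ℝ) :=
                    ENNReal.rpow_le_rpow_of_exponent_le hone hκ1.le
                _ = ENNReal.ofReal (C₀ * (lam a * lam a) ^ A a) := ENNReal.rpow_one _
      calc ENNReal.ofReal t * wMeas w S
          ≤ ENNReal.ofReal t * ∑' j : u,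
            wMeas w (aniBox a ((j : S) : Fin n → ℝ) (mu a * sel (j : S))) :=
            mul_le_mul_right hstep1 _
        _ = ∑' j : u, ENNReal.ofReal t *
            wMeas w (aniBox a ((j : S) : Fin n → ℝ) (mu a * sel (j : S))) :=
            ENNReal.tsum_mul_left.symm
        _ ≤ ∑' j : u, ENNReal.ofReal (C₀ * (lam a * mu a) ^ A a) *
            (ENNReal.ofReal (C₀ * (lam a * 1) ^ A a) *
              ∫⁻ y in aniBox a ((j : S) : Fin n → ℝ) (sel (j : S)),
                ENNReal.ofReal (|f y| * w y)) := ENNReal.tsum_le_tsum hstep2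
        _ = ENNReal.ofReal (C₀ * (lam a * mu a) ^ A a) *
            (ENNReal.ofReal (C₀ * (lam a * 1) ^ A a) *
              ∑' j : u, ∫⁻ y in aniBox a ((j : S) : Fin n → ℝ) (sel (j : S)),
                ENNReal.ofReal (|f y| * w y)) := by
            rw [ENNReal.tsum_mul_left, ENNReal.tsum_mul_left]
        _ ≤ ENNReal.ofReal (C₀ * (lam a * mu a) ^ A a) *
            (ENNReal.ofReal (C₀ * (lam a * 1) ^ A a) *
              (N * wMeas w (aniBox a z (lam a * r)) ^ κ)) :=
            mul_le_mul_right (mul_le_mul_right (hsum.trans hmor) _) _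
        _ ≤ ENNReal.ofReal (C₀ * (lam a * mu a) ^ A a) *
            (ENNReal.ofReal (C₀ * (lam a * 1) ^ A a) *
              (N * (ENNReal.ofReal (C₀ * (lam a * lam a) ^ A a) *
                wMeas w (aniBox a z r) ^ κ))) :=
            mul_le_mul_right (mul_le_mul_right (mul_le_mul_right hEsk _) _) _
        _ = ENNReal.ofReal ((C₀ * (lam a * 1) ^ A a) * (C₀ * (lam a * lam a) ^ A a) *
            (C₀ * (lam a * mu a) ^ A a)) * N * wMeas w (aniBox a z r) ^ κ := by
            rw [hofc]
            ring
  have htne : ENNReal.ofReal t ≠ 0 := (ENNReal.ofReal_pos.mpr ht).ne'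
  have h1 : wMeas w S ≤
      ENNReal.ofReal ((C₀ * (lam a * 1) ^ A a) * (C₀ * (lam a * lam a) ^ A a) *
        (C₀ * (lam a * mu a) ^ A a)) * N * wMeas w (aniBox a z r) ^ κ /
      ENNReal.ofReal t := by
    rw [ENNReal.le_div_iff_mul_le (Or.inl htne) (Or.inl ENNReal.ofReal_ne_top)]
    rw [mul_comm]
    exact key
  refine h1.trans (le_of_eq ?_)
  rw [ENNReal.ofReal_div_of_pos ht, div_eq_mul_inv, div_eq_mul_inv]
  ring
end
end

section
/- Let 1 < p < ∞ and α ∈ ℝ. The anisotropic power weight w(x) = |x|_a^α, where |x|_a = max_{1≤i≤n} |x_i|^{1/a_i}, belongs to the anisotropic Muckenhoupt class A_p if and only if −|a| < α < |a|(p−1), where |a| = a_1 + ⋯ + a_n. -/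
open MeasureTheory ENNReal Set

noncomputable section

/-- The anisotropic quasi-norm `|x|_a = max_{1 ≤ i ≤ n} |x_i|^{1/a_i}`. -/
def aNorm {n : ℕ} (a x : Fin n → ℝ) : ℝ :=
  ⨆ i, |x i| ^ (1 / a i)

section Basic
variable {n : ℕ} {a : Fin n → ℝ}

lemma aNorm_nonneg (y : Fin n → ℝ) : 0 ≤ aNorm a y :=
  Real.iSup_nonneg fun i => Real.rpow_nonneg (abs_nonneg _) _

lemma le_aNorm (hn : 0 < n) (y : Fin n → ℝ) (i : Fin n) : |y i| ^ (1 / a i) ≤ aNorm a y := by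
  have : Nonempty (Fin n) := ⟨⟨0, hn⟩⟩
  exact le_ciSup (Finite.bddAbove_range fun j => |y j| ^ (1 / a j)) i

lemma aNorm_le_iff (hn : 0 < n) (ha : ∀ i, 0 < a i) {y : Fin n → ℝ} {r : ℝ} (hr : 0 ≤ r) :
    aNorm a y ≤ r ↔ ∀ i, |y i| ≤ r ^ a i := by
  have : Nonempty (Fin n) := ⟨⟨0, hn⟩⟩
  rw [aNorm, ciSup_le_iff (Finite.bddAbove_range _)]
  refine forall_congr' fun i => ?_
  constructor
  · intro h
    calc |y i| = (|y i| ^ (1 / a i)) ^ a i := by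
          rw [← Real.rpow_mul (abs_nonneg _), one_div,
            inv_mul_cancel₀ (ha i).ne', Real.rpow_one]
      _ ≤ r ^ a i := Real.rpow_le_rpow (Real.rpow_nonneg (abs_nonneg _) _) h (ha i).le
  · intro h
    calc |y i| ^ (1 / a i) ≤ (r ^ a i) ^ (1 / a i) :=
          Real.rpow_le_rpow (abs_nonneg _) h (by have := ha i; positivity)
      _ = r := by
          rw [← Real.rpow_mul hr, one_div, mul_inv_cancel₀ (ha i).ne', Real.rpow_one]

lemma mem_aniBox_zero_iff (hn : 0 < n) (ha : ∀ i, 0 < a i) {y : Fin n → ℝ} {r : ℝ} (hr : 0 ≤ r) :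
    y ∈ aniBox a 0 r ↔ aNorm a y ≤ r := by
  rw [aNorm_le_iff hn ha hr]
  simp [aniBox]

lemma aniBox_eq_pi (x : Fin n → ℝ) (t : ℝ) :
    aniBox a x t = Set.pi Set.univ fun i => Icc (x i - t ^ a i) (x i + t ^ a i) := by
  ext y
  simp only [aniBox, mem_setOf_eq, mem_pi, mem_univ, forall_true_left, mem_Icc]
  refine forall_congr' fun i => ?_
  rw [abs_sub_le_iff]
  constructor
  · rintro ⟨h1, h2⟩; constructor <;> linarith
  · rintro ⟨h1, h2⟩; constructor <;> linarith

lemma measurableSet_aniBox (x : Fin n → ℝ) (t : ℝ) : MeasurableSet (aniBox a x t) := by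
  rw [aniBox_eq_pi]
  exact MeasurableSet.pi (Set.countable_univ) fun i _ => measurableSet_Icc

lemma volume_aniBox (x : Fin n → ℝ) {t : ℝ} (ht : 0 < t) :
    volume (aniBox a x t) = ENNReal.ofReal (2 ^ n * t ^ (∑ i, a i)) := by
  rw [aniBox_eq_pi, volume_pi_pi]
  have h1 : ∀ i : Fin n, volume (Icc (x i - t ^ a i) (x i + t ^ a i))
      = ENNReal.ofReal (2 * t ^ a i) := by
    intro i; rw [Real.volume_Icc]; ring_nf
  simp_rw [h1]
  rw [← ENNReal.ofReal_prod_of_nonneg (fun i _ => by positivity)]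
  congr 1
  rw [Finset.prod_mul_distrib, Finset.prod_const, ← Real.rpow_sum_of_pos ht]
  simp

/-- The quasi-norm constant. -/
def aniL {n : ℕ} (a : Fin n → ℝ) : ℝ := max 1 (⨆ i, (2:ℝ) ^ (1 / a i))

lemma one_le_aniL : 1 ≤ aniL a := le_max_left _ _

lemma aniL_pos : 0 < aniL a := lt_of_lt_of_le one_pos one_le_aniL

lemma two_le_aniL_rpow (hn : 0 < n) (ha : ∀ i, 0 < a i) (i : Fin n) :
    2 ≤ aniL a ^ a i := by
  have : Nonempty (Fin n) := ⟨⟨0, hn⟩⟩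
  have h1 : (2:ℝ) ^ (1 / a i) ≤ aniL a :=
    le_trans (le_ciSup (Finite.bddAbove_range fun j => (2:ℝ) ^ (1 / a j)) i)
      (le_max_right _ _)
  calc (2:ℝ) = ((2:ℝ) ^ (1 / a i)) ^ a i := by
        rw [← Real.rpow_mul (by norm_num), one_div, inv_mul_cancel₀ (ha i).ne',
          Real.rpow_one]
    _ ≤ aniL a ^ a i := Real.rpow_le_rpow (by positivity) h1 (ha i).le

lemma abs_le_rpow_of_aNorm_le (hn : 0 < n) (ha : ∀ i, 0 < a i) {x : Fin n → ℝ} {M : ℝ}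
    (hM : aNorm a x ≤ M) (i : Fin n) : |x i| ≤ M ^ a i := by
  have hM0 : 0 ≤ M := le_trans (aNorm_nonneg x) hM
  exact (aNorm_le_iff hn ha hM0).mp hM i

lemma aNorm_le_of_mem (hn : 0 < n) (ha : ∀ i, 0 < a i) {x y : Fin n → ℝ} {t M : ℝ}
    (ht : 0 < t) (hM1 : aNorm a x ≤ M) (hM2 : t ≤ M) (hy : y ∈ aniBox a x t) :
    aNorm a y ≤ aniL a * M := by
  have hM0 : 0 < M := lt_of_lt_of_le ht hM2
  rw [aNorm_le_iff hn ha (mul_nonneg aniL_pos.le hM0.le)]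
  intro i
  have h1 : |x i| ≤ M ^ a i := abs_le_rpow_of_aNorm_le hn ha hM1 i
  have h2 : t ^ a i ≤ M ^ a i := Real.rpow_le_rpow ht.le hM2 (ha i).le
  have h3 : |y i| ≤ |x i| + t ^ a i := by
    have := hy i
    calc |y i| = |(y i - x i) + x i| := by ring_nf
      _ ≤ |y i - x i| + |x i| := abs_add_le _ _
      _ ≤ |x i| + t ^ a i := by linarith
  have h4 : (aniL a * M) ^ a i = aniL a ^ a i * M ^ a i :=
    Real.mul_rpow aniL_pos.le hM0.le
  have h5 : 2 ≤ aniL a ^ a i := two_le_aniL_rpow hn ha i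
  have h6 : 0 ≤ M ^ a i := Real.rpow_nonneg hM0.le _
  rw [h4]
  nlinarith
lemma mem_aniBox_symm {x y : Fin n → ℝ} {t : ℝ} (hy : y ∈ aniBox a x t) :
    x ∈ aniBox a y t := fun i => by rw [abs_sub_comm]; exact hy i

lemma aNorm_le_of_far (hn : 0 < n) (ha : ∀ i, 0 < a i) {x y : Fin n → ℝ} {t : ℝ}
    (ht : 0 < t) (hfar : aniL a * t < aNorm a x) (hy : y ∈ aniBox a x t) :
    aNorm a x ≤ aniL a * aNorm a y ∧ aNorm a y ≤ aniL a * aNorm a x := by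
  have hx' := mem_aniBox_symm hy
  rcases le_total (aNorm a y) t with h | h
  · exact absurd (aNorm_le_of_mem hn ha ht h le_rfl hx') (by linarith)
  · constructor
    · exact aNorm_le_of_mem hn ha ht le_rfl h hx'
    · refine aNorm_le_of_mem hn ha ht le_rfl ?_ hy
      calc t ≤ aniL a * t := le_mul_of_one_le_left ht.le one_le_aniL
        _ ≤ aNorm a x := hfar.le

end Basic

section Upper
variable {n : ℕ} {a : Fin n → ℝ}

lemma sum_a_pos (hn : 0 < n) (ha : ∀ i, 0 < a i) : 0 < ∑ i, a i :=
  Finset.sum_pos (fun i _ => ha i) ⟨⟨0, hn⟩, Finset.mem_univ _⟩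

lemma aniBox_zero_mono (hn : 0 < n) (ha : ∀ i, 0 < a i) {u v : ℝ} (hu : 0 ≤ u) (huv : u ≤ v) :
    aniBox a 0 u ⊆ aniBox a 0 v := by
  intro y hy
  rw [mem_aniBox_zero_iff hn ha hu] at hy
  rw [mem_aniBox_zero_iff hn ha (hu.trans huv)]
  exact hy.trans huv

/-- key pointwise bound: on a set where `c ≤ aNorm a y` (`0 < c`),
`ofReal (aNorm a y ^ β) ≤ ofReal (c ^ β)` for `β ≤ 0`. -/
lemma lintegral_shell_le (hn : 0 < n) (ha : ∀ i, 0 < a i) {β c : ℝ} (hc : 0 < c)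
    (hβ : β ≤ 0) {S : Set (Fin n → ℝ)} (hS : MeasurableSet S)
    (hSc : ∀ y ∈ S, c ≤ aNorm a y) :
    ∫⁻ y in S, ENNReal.ofReal (aNorm a y ^ β) ≤ ENNReal.ofReal (c ^ β) * volume S := by
  rw [← setLIntegral_const S (ENNReal.ofReal (c ^ β))]
  refine lintegral_mono_ae ?_
  rw [ae_restrict_iff' hS]
  filter_upwards with y hy
  exact ENNReal.ofReal_le_ofReal
    (Real.rpow_le_rpow_of_nonpos hc (hSc y hy) hβ)

lemma lintegral_const_le_shell (hn : 0 < n) (ha : ∀ i, 0 < a i) {c : ℝ}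
    {S : Set (Fin n → ℝ)} (hS : MeasurableSet S) {f : (Fin n → ℝ) → ℝ}
    (hSc : ∀ y ∈ S, c ≤ f y) :
    ENNReal.ofReal c * volume S ≤ ∫⁻ y in S, ENNReal.ofReal (f y) := by
  rw [← setLIntegral_const S (ENNReal.ofReal c)]
  refine lintegral_mono_ae ?_
  rw [ae_restrict_iff' hS]
  filter_upwards with y hy
  exact ENNReal.ofReal_le_ofReal (hSc y hy)

lemma lintegral_aNorm_rpow_le (hn : 0 < n) (ha : ∀ i, 0 < a i) {β : ℝ}
    (hβ : -(∑ i, a i) < β) :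
    ∃ K : ℝ, 0 < K ∧ ∀ t : ℝ, 0 < t →
      ∫⁻ y in aniBox a 0 t, ENNReal.ofReal (aNorm a y ^ β)
        ≤ ENNReal.ofReal (K * t ^ ((∑ i, a i) + β)) := by
  set s := ∑ i, a i with hs_def
  have hs : 0 < s := sum_a_pos hn ha
  rcases le_or_gt 0 β with hβ0 | hβ0
  · -- easy case : β ≥ 0
    refine ⟨2 ^ n, by positivity, fun t ht => ?_⟩
    have hbd : ∫⁻ y in aniBox a 0 t, ENNReal.ofReal (aNorm a y ^ β)
        ≤ ∫⁻ _ in aniBox a 0 t, ENNReal.ofReal (t ^ β) := by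
      refine lintegral_mono_ae ?_
      rw [ae_restrict_iff' (measurableSet_aniBox _ _)]
      filter_upwards with y hy
      refine ENNReal.ofReal_le_ofReal ?_
      exact Real.rpow_le_rpow (aNorm_nonneg y)
        ((mem_aniBox_zero_iff hn ha ht.le).mp hy) hβ0
    refine hbd.trans ?_
    rw [setLIntegral_const, volume_aniBox _ ht,
      ← ENNReal.ofReal_mul (Real.rpow_nonneg ht.le β)]
    refine le_of_eq (congrArg _ ?_)
    rw [Real.rpow_add ht]
    ring
  · -- hard case : -s < β < 0
    set q : ℝ := (2:ℝ)⁻¹ ^ (s + β) with hq_def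
    have hq0 : 0 < q := Real.rpow_pos_of_pos (by norm_num) _
    have hq1 : q < 1 := Real.rpow_lt_one (by norm_num) (by norm_num) (by linarith)
    have h1q : 0 < 1 - q := by linarith
    refine ⟨2 ^ n * 2 ^ (-β) * (1 - q)⁻¹,
      mul_pos (mul_pos (by positivity) (Real.rpow_pos_of_pos two_pos _))
        (inv_pos.mpr h1q), fun t ht => ?_⟩
    -- radii and shells
    set r : ℕ → ℝ := fun k => (2:ℝ)⁻¹ ^ (k : ℝ) * t with hr_def
    have hrpos : ∀ k, 0 < r k := fun k => by
      have : (0:ℝ) < (2:ℝ)⁻¹ ^ (k:ℝ) := Real.rpow_pos_of_pos (by norm_num) _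
      exact mul_pos this ht
    have hr_succ : ∀ k, r (k + 1) = 2⁻¹ * r k := by
      intro k
      simp only [hr_def, Nat.cast_add, Nat.cast_one]
      rw [Real.rpow_add (by norm_num : (0:ℝ) < 2⁻¹), Real.rpow_one]
      ring
    have hr0 : r 0 = t := by simp [hr_def]
    have hr_nat : ∀ k : ℕ, r k = (2:ℝ)⁻¹ ^ k * t := fun k => by
      simp only [hr_def]; rw [Real.rpow_natCast]
    set S : ℕ → Set (Fin n → ℝ) := fun k => aniBox a 0 (r k) \ aniBox a 0 (r (k + 1))
      with hS_def
    -- covering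
    have hcover : aniBox a 0 t ⊆ (Set.pi Set.univ fun _ => ({0} : Set ℝ)) ∪ ⋃ k, S k := by
      intro y hy
      have hyt : aNorm a y ≤ t := (mem_aniBox_zero_iff hn ha ht.le).mp hy
      rcases le_or_gt (aNorm a y) 0 with h0 | h0
      · left
        simp only [mem_pi, mem_univ, forall_true_left, mem_singleton_iff]
        intro i
        by_contra hne
        have h1 : 0 < |y i| ^ (1 / a i) :=
          Real.rpow_pos_of_pos (abs_pos.mpr hne) _
        have h2 := le_aNorm (a := a) hn y i
        linarith
      · right
        have hex : ∃ k, r (k + 1) < aNorm a y := by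
          obtain ⟨k, hk⟩ := exists_pow_lt_of_lt_one
            (div_pos h0 ht) (by norm_num : (2:ℝ)⁻¹ < 1)
          refine ⟨k, ?_⟩
          have hle : r (k + 1) ≤ (2:ℝ)⁻¹ ^ k * t := by
            rw [hr_nat (k+1)]
            refine mul_le_mul_of_nonneg_right ?_ ht.le
            exact pow_le_pow_of_le_one (by norm_num) (by norm_num) (by omega)
          calc r (k+1) ≤ (2:ℝ)⁻¹ ^ k * t := hle
            _ < (aNorm a y / t) * t := by
                exact mul_lt_mul_of_pos_right hk ht
            _ = aNorm a y := by field_simp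
        classical
        let m := Nat.find hex
        have hm1 : r (m + 1) < aNorm a y := Nat.find_spec hex
        have hm2 : aNorm a y ≤ r m := by
          rcases Nat.eq_zero_or_pos m with h | h
          · rw [h, hr0]; exact hyt
          · have h' := Nat.find_min hex (show m - 1 < m by omega)
            rw [show m - 1 + 1 = m by omega] at h'
            exact not_lt.mp h'
        refine mem_iUnion.mpr ⟨m, ?_, ?_⟩
        · exact (mem_aniBox_zero_iff hn ha (hrpos m).le).mpr hm2
        · intro hmem
          exact absurd ((mem_aniBox_zero_iff hn ha (hrpos (m+1)).le).mp hmem)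
            (not_le.mpr hm1)
    -- the zero set has measure zero
    have hzero : volume (Set.pi Set.univ fun _ : Fin n => ({0} : Set ℝ)) = 0 := by
      rw [volume_pi_pi]
      simp [Real.volume_singleton, Finset.prod_const, zero_pow hn.ne']
    -- pointwise shell bounds
    have hshell : ∀ k, ∫⁻ y in S k, ENNReal.ofReal (aNorm a y ^ β)
        ≤ ENNReal.ofReal ((r (k+1)) ^ β) * volume (aniBox a 0 (r k)) := by
      intro k
      have h1 : ∫⁻ y in S k, ENNReal.ofReal (aNorm a y ^ β)
          ≤ ENNReal.ofReal ((r (k+1)) ^ β) * volume (S k) := by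
        refine lintegral_shell_le hn ha (hrpos (k+1)) hβ0.le
          ((measurableSet_aniBox _ _).diff (measurableSet_aniBox _ _)) ?_
        intro y hy
        have := hy.2
        rw [mem_aniBox_zero_iff hn ha (hrpos (k+1)).le] at this
        exact (not_le.mp this).le
      refine h1.trans ?_
      exact mul_le_mul_right (measure_mono diff_subset) _
    -- real computation of the shell bound
    have h2i : (0:ℝ) ≤ 2⁻¹ := by norm_num
    have h2i' : (0:ℝ) < 2⁻¹ := by norm_num
    have e1 : ∀ (c γ : ℝ), ((2:ℝ)⁻¹ ^ c * t) ^ γ = 2⁻¹ ^ (c * γ) * t ^ γ := by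
      intro c γ
      rw [Real.mul_rpow (Real.rpow_nonneg h2i _) ht.le, ← Real.rpow_mul h2i]
    have key : ∀ k : ℕ, (r (k+1)) ^ β * (2 ^ n * (r k) ^ s)
        = (2 ^ n * 2 ^ (-β) * t ^ (s + β)) * q ^ k := by
      intro k
      have e2 : q ^ (k:ℕ) = (2:ℝ)⁻¹ ^ ((s+β) * (k:ℝ)) := by
        rw [hq_def, ← Real.rpow_natCast ((2:ℝ)⁻¹ ^ (s+β)) k, ← Real.rpow_mul h2i]
      have e3 : (2:ℝ) ^ (-β) = 2⁻¹ ^ β := by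
        rw [Real.inv_rpow (by norm_num : (0:ℝ) ≤ 2), ← Real.rpow_neg (by norm_num : (0:ℝ) ≤ 2)]
      have l1 : (r (k+1)) ^ β * (2 ^ n * (r k) ^ s)
          = 2 ^ n * 2⁻¹ ^ (((k+1:ℕ):ℝ) * β + (k:ℝ) * s) * t ^ (s + β) := by
        simp only [hr_def]
        rw [e1, e1, Real.rpow_add h2i', Real.rpow_add ht]
        ring
      have l2 : (2 ^ n * 2 ^ (-β) * t ^ (s + β)) * q ^ k
          = 2 ^ n * 2⁻¹ ^ (β + (s+β) * (k:ℝ)) * t ^ (s + β) := by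
        rw [e2, e3, Real.rpow_add h2i']
        ring
      rw [l1, l2, show ((k+1:ℕ):ℝ) * β + (k:ℝ) * s = β + (s+β) * (k:ℝ) by push_cast; ring]
    -- put it together
    have hct : (0:ℝ) ≤ 2 ^ n * 2 ^ (-β) * t ^ (s + β) := by positivity
    calc ∫⁻ y in aniBox a 0 t, ENNReal.ofReal (aNorm a y ^ β)
        ≤ ∫⁻ y in (Set.pi Set.univ fun _ : Fin n => ({0} : Set ℝ)) ∪ ⋃ k, S k,
            ENNReal.ofReal (aNorm a y ^ β) := lintegral_mono_set hcover
      _ ≤ (∫⁻ y in (Set.pi Set.univ fun _ : Fin n => ({0} : Set ℝ)),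
            ENNReal.ofReal (aNorm a y ^ β))
          + ∫⁻ y in ⋃ k, S k, ENNReal.ofReal (aNorm a y ^ β) :=
            lintegral_union_le _ _ _
      _ = ∫⁻ y in ⋃ k, S k, ENNReal.ofReal (aNorm a y ^ β) := by
            rw [setLIntegral_measure_zero _ _ hzero, zero_add]
      _ ≤ ∑' k, ∫⁻ y in S k, ENNReal.ofReal (aNorm a y ^ β) := lintegral_iUnion_le _ _
      _ ≤ ∑' k, ENNReal.ofReal ((r (k+1)) ^ β) * volume (aniBox a 0 (r k)) :=
            ENNReal.tsum_le_tsum hshell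
      _ = ∑' k : ℕ, ENNReal.ofReal (2 ^ n * 2 ^ (-β) * t ^ (s + β)) * ENNReal.ofReal q ^ k := by
            refine tsum_congr fun k => ?_
            rw [volume_aniBox _ (hrpos k),
              ← ENNReal.ofReal_mul (Real.rpow_nonneg (hrpos (k+1)).le β), key k,
              ENNReal.ofReal_mul hct, ENNReal.ofReal_pow hq0.le]
      _ = ENNReal.ofReal (2 ^ n * 2 ^ (-β) * t ^ (s + β)) * (1 - ENNReal.ofReal q)⁻¹ := by
            rw [ENNReal.tsum_mul_left, ENNReal.tsum_geometric]
      _ = ENNReal.ofReal (2 ^ n * 2 ^ (-β) * (1 - q)⁻¹ * t ^ (s + β)) := by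
            rw [show (1 : ℝ≥0∞) - ENNReal.ofReal q = ENNReal.ofReal (1 - q) by
                rw [ENNReal.ofReal_sub 1 hq0.le, ENNReal.ofReal_one],
              ← ENNReal.ofReal_inv_of_pos h1q,
              ← ENNReal.ofReal_mul hct]
            congr 1
            ring
      _ ≤ ENNReal.ofReal (2 ^ n * 2 ^ (-β) * (1 - q)⁻¹ * t ^ (s + β)) := le_rfl
end Upper

section Div
variable {n : ℕ} {a : Fin n → ℝ}

/-- Volume of the dyadic shell between radii `2⁻¹ * u` and `u`. -/
lemma volume_shell (hn : 0 < n) (ha : ∀ i, 0 < a i) {u : ℝ} (hu : 0 < u) :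
    volume (aniBox a 0 u \ aniBox a 0 (2⁻¹ * u))
      = ENNReal.ofReal (2 ^ n * u ^ (∑ i, a i) * (1 - (2:ℝ)⁻¹ ^ (∑ i, a i))) := by
  have hs := sum_a_pos hn ha
  have hu2 : 0 < 2⁻¹ * u := by positivity
  rw [measure_diff (aniBox_zero_mono hn ha hu2.le (by linarith))
    (measurableSet_aniBox _ _).nullMeasurableSet
    (by rw [volume_aniBox _ hu2]; exact ENNReal.ofReal_ne_top),
    volume_aniBox _ hu, volume_aniBox _ hu2,
    ← ENNReal.ofReal_sub _ (by positivity)]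
  congr 1
  rw [Real.mul_rpow (by norm_num : (0:ℝ) ≤ 2⁻¹) hu.le]
  ring

lemma lintegral_aNorm_rpow_eq_top (hn : 0 < n) (ha : ∀ i, 0 < a i) {β : ℝ}
    (hβ : β ≤ -(∑ i, a i)) :
    ∫⁻ y in aniBox a 0 1, ENNReal.ofReal (aNorm a y ^ β) = ⊤ := by
  set s := ∑ i, a i with hs_def
  have hs : 0 < s := sum_a_pos hn ha
  set r : ℕ → ℝ := fun k => (2:ℝ)⁻¹ ^ (k : ℝ) with hr_def
  have h2i : (0:ℝ) ≤ 2⁻¹ := by norm_num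
  have h2i' : (0:ℝ) < 2⁻¹ := by norm_num
  have hrpos : ∀ k, 0 < r k := fun k => Real.rpow_pos_of_pos h2i' _
  have hr_succ : ∀ k, r (k + 1) = 2⁻¹ * r k := by
    intro k
    simp only [hr_def, Nat.cast_add, Nat.cast_one]
    rw [Real.rpow_add h2i', Real.rpow_one]
    ring
  have hr_anti : ∀ {k l : ℕ}, k ≤ l → r l ≤ r k := by
    intro k l hkl
    exact Real.rpow_le_rpow_of_exponent_ge h2i' (by norm_num) (by exact_mod_cast hkl)
  have hr_le_one : ∀ k, r k ≤ 1 := by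
    intro k
    have := hr_anti (Nat.zero_le k)
    simpa [hr_def] using this
  set S : ℕ → Set (Fin n → ℝ) := fun k => aniBox a 0 (r k) \ aniBox a 0 (r (k + 1))
    with hS_def
  have hSmeas : ∀ k, MeasurableSet (S k) :=
    fun k => (measurableSet_aniBox _ _).diff (measurableSet_aniBox _ _)
  have hSdisj : Pairwise (Function.onFun Disjoint S) := by
    have key : ∀ k l : ℕ, k < l → Disjoint (S k) (S l) := by
      intro k l hkl
      have hsub : S l ⊆ aniBox a 0 (r (k + 1)) :=
        diff_subset.trans (aniBox_zero_mono hn ha (hrpos l).le (hr_anti hkl))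
      exact (disjoint_sdiff_left.mono_right hsub).symm.symm
      -- Disjoint (A \ B) (S l) with S l ⊆ B
    intro k l hkl
    rcases lt_or_gt_of_ne hkl with h | h
    · exact key k l h
    · exact (key l k h).symm
  have hUnion : (⋃ k, S k) ⊆ aniBox a 0 1 := by
    refine iUnion_subset fun k => ?_
    exact diff_subset.trans (aniBox_zero_mono hn ha (hrpos k).le (hr_le_one k))
  -- lower bound each shell integral by the constant c₀
  have hterm : ∀ k : ℕ, ENNReal.ofReal (2 ^ n * (1 - (2:ℝ)⁻¹ ^ s))
      ≤ ∫⁻ y in S k, ENNReal.ofReal (aNorm a y ^ β) := by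
    intro k
    have hlow : ∀ y ∈ S k, (r k) ^ (-s) ≤ aNorm a y ^ β := by
      intro y hy
      have hy1 : aNorm a y ≤ r k := (mem_aniBox_zero_iff hn ha (hrpos k).le).mp hy.1
      have hy2 : r (k+1) < aNorm a y := by
        have := hy.2
        rw [mem_aniBox_zero_iff hn ha (hrpos (k+1)).le] at this
        exact not_le.mp this
      have hypos : 0 < aNorm a y := lt_trans (hrpos (k+1)) hy2
      calc (r k) ^ (-s) ≤ (r k) ^ β :=
            Real.rpow_le_rpow_of_exponent_ge (hrpos k) (hr_le_one k) hβ
        _ ≤ aNorm a y ^ β := by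
            rcases eq_or_lt_of_le hβ with h | h
            · exact Real.rpow_le_rpow_of_nonpos hypos hy1 (by linarith)
            · exact Real.rpow_le_rpow_of_nonpos hypos hy1 (by linarith)
    have h1 : ENNReal.ofReal ((r k) ^ (-s)) * volume (S k)
        ≤ ∫⁻ y in S k, ENNReal.ofReal (aNorm a y ^ β) :=
      lintegral_const_le_shell hn ha (hSmeas k) hlow
    refine le_trans (le_of_eq ?_) h1
    have hvol : volume (S k) = ENNReal.ofReal (2 ^ n * (r k) ^ s * (1 - (2:ℝ)⁻¹ ^ s)) := by
      rw [hS_def]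
      simp only
      rw [hr_succ k]
      exact volume_shell hn ha (hrpos k)
    rw [hvol, ← ENNReal.ofReal_mul (Real.rpow_nonneg (hrpos k).le _)]
    congr 1
    have : (r k) ^ (-s) * (r k) ^ s = 1 := by
      rw [← Real.rpow_add (hrpos k)]
      simp
    calc 2 ^ n * (1 - (2:ℝ)⁻¹ ^ s)
        = ((r k) ^ (-s) * (r k) ^ s) * (2 ^ n * (1 - (2:ℝ)⁻¹ ^ s)) := by rw [this]; ring
      _ = (r k) ^ (-s) * (2 ^ n * (r k) ^ s * (1 - (2:ℝ)⁻¹ ^ s)) := by ring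
  -- conclude
  have hc0 : (0:ℝ) < 2 ^ n * (1 - (2:ℝ)⁻¹ ^ s) := by
    have : (2:ℝ)⁻¹ ^ s < 1 := Real.rpow_lt_one h2i (by norm_num) hs
    have h2n : (0:ℝ) < 2 ^ n := by positivity
    nlinarith
  rw [eq_top_iff]
  calc (⊤ : ℝ≥0∞) = ∑' _ : ℕ, ENNReal.ofReal (2 ^ n * (1 - (2:ℝ)⁻¹ ^ s)) :=
        (ENNReal.tsum_const_eq_top_of_ne_zero
          (by simpa using ENNReal.ofReal_pos.mpr hc0 |>.ne')).symm
    _ ≤ ∑' k, ∫⁻ y in S k, ENNReal.ofReal (aNorm a y ^ β) := ENNReal.tsum_le_tsum hterm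
    _ = ∫⁻ y in ⋃ k, S k, ENNReal.ofReal (aNorm a y ^ β) :=
        (lintegral_iUnion hSmeas hSdisj _).symm
    _ ≤ ∫⁻ y in aniBox a 0 1, ENNReal.ofReal (aNorm a y ^ β) :=
        lintegral_mono_set hUnion

lemma lintegral_aNorm_rpow_pos (hn : 0 < n) (ha : ∀ i, 0 < a i) (γ : ℝ) :
    0 < ∫⁻ y in aniBox a 0 1, ENNReal.ofReal (aNorm a y ^ γ) := by
  have hs := sum_a_pos hn ha
  set S : Set (Fin n → ℝ) := aniBox a 0 1 \ aniBox a 0 2⁻¹ with hS_def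
  have hlow : ∀ y ∈ S, min ((2:ℝ)⁻¹ ^ γ) 1 ≤ aNorm a y ^ γ := by
    intro y hy
    have hy1 : aNorm a y ≤ 1 := (mem_aniBox_zero_iff hn ha one_pos.le).mp hy.1
    have hy2 : (2:ℝ)⁻¹ < aNorm a y := by
      have := hy.2
      rw [mem_aniBox_zero_iff hn ha (by norm_num : (0:ℝ) ≤ 2⁻¹)] at this
      exact not_le.mp this
    rcases le_or_gt 0 γ with h | h
    · exact le_trans (min_le_left _ _)
        (Real.rpow_le_rpow (by norm_num) hy2.le h)
    · refine le_trans (min_le_right _ _) ?_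
      calc (1:ℝ) = (1:ℝ) ^ γ := (Real.one_rpow γ).symm
        _ ≤ aNorm a y ^ γ :=
          Real.rpow_le_rpow_of_nonpos (lt_trans (by norm_num) hy2) hy1 h.le
  have h1 : ENNReal.ofReal (min ((2:ℝ)⁻¹ ^ γ) 1) * volume S
      ≤ ∫⁻ y in S, ENNReal.ofReal (aNorm a y ^ γ) :=
    lintegral_const_le_shell hn ha
      ((measurableSet_aniBox _ _).diff (measurableSet_aniBox _ _)) hlow
  have hvol : volume S = ENNReal.ofReal (2 ^ n * 1 ^ (∑ i, a i) * (1 - (2:ℝ)⁻¹ ^ (∑ i, a i))) := by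
    have h := volume_shell hn ha (a := a) one_pos
    rw [mul_one] at h
    rw [hS_def]
    exact h
  have hc0 : (0:ℝ) < 2 ^ n * 1 ^ (∑ i, a i) * (1 - (2:ℝ)⁻¹ ^ (∑ i, a i)) := by
    have : (2:ℝ)⁻¹ ^ (∑ i, a i) < 1 :=
      Real.rpow_lt_one (by norm_num) (by norm_num) hs
    have h2n : (0:ℝ) < 2 ^ n := by positivity
    rw [Real.one_rpow]
    nlinarith
  have hmin : (0:ℝ) < min ((2:ℝ)⁻¹ ^ γ) 1 :=
    lt_min (Real.rpow_pos_of_pos (by norm_num) _) one_pos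
  calc (0:ℝ≥0∞) < ENNReal.ofReal (min ((2:ℝ)⁻¹ ^ γ) 1) * volume S := by
        rw [hvol]
        exact ENNReal.mul_pos (ENNReal.ofReal_pos.mpr hmin).ne'
          (ENNReal.ofReal_pos.mpr hc0).ne'
    _ ≤ ∫⁻ y in S, ENNReal.ofReal (aNorm a y ^ γ) := h1
    _ ≤ ∫⁻ y in aniBox a 0 1, ENNReal.ofReal (aNorm a y ^ γ) :=
        lintegral_mono_set diff_subset
end Div

section Main
variable {n : ℕ} {a : Fin n → ℝ}

lemma rpow_far_bound {L u v γ : ℝ} (hL : 1 ≤ L) (hu : 0 < u) (hv : 0 < v)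
    (h1 : u ≤ L * v) (h2 : v ≤ L * u) : v ^ γ ≤ L ^ |γ| * u ^ γ := by
  have hL0 : (0:ℝ) < L := lt_of_lt_of_le one_pos hL
  rcases le_or_gt 0 γ with h | h
  · rw [abs_of_nonneg h]
    calc v ^ γ ≤ (L * u) ^ γ := Real.rpow_le_rpow hv.le h2 h
      _ = L ^ γ * u ^ γ := Real.mul_rpow hL0.le hu.le
  · rw [abs_of_neg h]
    have hdiv : u / L ≤ v := (div_le_iff₀' hL0).mpr h1
    calc v ^ γ ≤ (u / L) ^ γ :=
          Real.rpow_le_rpow_of_nonpos (by positivity) hdiv h.le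
      _ = u ^ γ / L ^ γ := Real.div_rpow hu.le hL0.le γ
      _ = L ^ (-γ) * u ^ γ := by
          rw [Real.rpow_neg hL0.le]
          ring

lemma avg_le_of_bound {B : Set (Fin n → ℝ)} (hB : MeasurableSet B)
    (hB0 : volume B ≠ 0) (hBt : volume B ≠ ⊤) {f : (Fin n → ℝ) → ℝ} {m : ℝ}
    (hbd : ∀ y ∈ B, f y ≤ m) :
    (volume B)⁻¹ * ∫⁻ y in B, ENNReal.ofReal (f y) ≤ ENNReal.ofReal m := by
  have h : ∫⁻ y in B, ENNReal.ofReal (f y) ≤ ENNReal.ofReal m * volume B := by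
    rw [← setLIntegral_const B (ENNReal.ofReal m)]
    refine lintegral_mono_ae ?_
    rw [ae_restrict_iff' hB]
    filter_upwards with y hy
    exact ENNReal.ofReal_le_ofReal (hbd y hy)
  calc (volume B)⁻¹ * ∫⁻ y in B, ENNReal.ofReal (f y)
      ≤ (volume B)⁻¹ * (ENNReal.ofReal m * volume B) := mul_le_mul_right h _
    _ = ENNReal.ofReal m * ((volume B)⁻¹ * volume B) := by ring
    _ = ENNReal.ofReal m := by rw [ENNReal.inv_mul_cancel hB0 hBt, mul_one]

theorem power_weight_mem_Ap_iff'
    (hn : 0 < n) (ha : ∀ i, 0 < a i)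
    (p : ℝ) (hp : 1 < p) (α : ℝ) :
    (∃ C : ℝ, 1 < C ∧ ∀ x t, 0 < t →
      ((volume (aniBox a x t))⁻¹ *
          ∫⁻ y in aniBox a x t, ENNReal.ofReal (aNorm a y ^ α)) *
        ((volume (aniBox a x t))⁻¹ *
          ∫⁻ y in aniBox a x t,
            ENNReal.ofReal ((aNorm a y ^ α) ^ (1 - p / (p - 1)))) ^ (p - 1)
        ≤ ENNReal.ofReal C) ↔
      (-(∑ i, a i) < α ∧ α < (∑ i, a i) * (p - 1)) := by
  have hs : 0 < ∑ i, a i := sum_a_pos hn ha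
  set s := ∑ i, a i with hs_def
  have hp1 : (0:ℝ) < p - 1 := by linarith
  have hp1' : p - 1 ≠ 0 := hp1.ne'
  have he : 1 - p / (p - 1) = -(1 / (p - 1)) := by field_simp; ring
  have hexp : ∀ y : Fin n → ℝ,
      (aNorm a y ^ α) ^ (1 - p / (p - 1)) = aNorm a y ^ (α * (1 - p / (p - 1))) :=
    fun y => (Real.rpow_mul (aNorm_nonneg y) _ _).symm
  set α' := α * (1 - p / (p - 1)) with hα'_def
  have hsum : α + α' * (p - 1) = 0 := by
    rw [hα'_def, he]; field_simp; ring
  have hrw : ∀ (x : Fin n → ℝ) (t : ℝ),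
      (∫⁻ y in aniBox a x t, ENNReal.ofReal ((aNorm a y ^ α) ^ (1 - p / (p - 1))))
        = ∫⁻ y in aniBox a x t, ENNReal.ofReal (aNorm a y ^ α') := by
    intro x t
    exact lintegral_congr fun y => by rw [hexp y]
  constructor
  · rintro ⟨C, hC1, hC⟩
    have hC01 := hC 0 1 one_pos
    set V := volume (aniBox a (0 : Fin n → ℝ) 1) with hV_def
    have hVval : V = ENNReal.ofReal (2 ^ n * 1 ^ s) := volume_aniBox _ one_pos
    have hV0 : V ≠ 0 := by
      rw [hVval]
      simp only [ne_eq, ENNReal.ofReal_eq_zero, not_le]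
      positivity
    have hVtop : V ≠ ⊤ := by rw [hVval]; exact ENNReal.ofReal_ne_top
    rw [hrw 0 1] at hC01
    constructor
    · by_contra h
      have hβ : α ≤ -s := not_lt.mp h
      have hI1 : ∫⁻ y in aniBox a (0 : Fin n → ℝ) 1, ENNReal.ofReal (aNorm a y ^ α) = ⊤ :=
        lintegral_aNorm_rpow_eq_top hn ha hβ
      have hI2 : (0:ℝ≥0∞) < ∫⁻ y in aniBox a (0 : Fin n → ℝ) 1,
          ENNReal.ofReal (aNorm a y ^ α') := lintegral_aNorm_rpow_pos hn ha α'
      rw [hI1, ENNReal.mul_top (ENNReal.inv_ne_zero.mpr hVtop)] at hC01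
      have hfac2 : (V⁻¹ * ∫⁻ y in aniBox a (0 : Fin n → ℝ) 1,
          ENNReal.ofReal (aNorm a y ^ α')) ^ (p - 1) ≠ 0 := by
        intro h0
        rw [ENNReal.rpow_eq_zero_iff] at h0
        rcases h0 with ⟨hb, _⟩ | ⟨_, hy⟩
        · exact mul_ne_zero (ENNReal.inv_ne_zero.mpr hVtop) hI2.ne' hb
        · linarith
      rw [ENNReal.top_mul hfac2] at hC01
      exact ENNReal.ofReal_ne_top (top_le_iff.mp hC01)
    · by_contra h
      have hβ2 : α' ≤ -s := by
        have hα : s * (p - 1) ≤ α := not_lt.mp h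
        have hu : (0:ℝ) < 1 / (p - 1) := by positivity
        have hinv : (1 / (p - 1)) * (p - 1) = 1 := by field_simp
        rw [hα'_def, he]
        nlinarith [mul_le_mul_of_nonneg_right hα hu.le]
      have hI2 : ∫⁻ y in aniBox a (0 : Fin n → ℝ) 1,
          ENNReal.ofReal (aNorm a y ^ α') = ⊤ :=
        lintegral_aNorm_rpow_eq_top hn ha hβ2
      have hI1 : (0:ℝ≥0∞) < ∫⁻ y in aniBox a (0 : Fin n → ℝ) 1,
          ENNReal.ofReal (aNorm a y ^ α) := lintegral_aNorm_rpow_pos hn ha α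
      rw [hI2, ENNReal.mul_top (ENNReal.inv_ne_zero.mpr hVtop),
        ENNReal.top_rpow_of_pos hp1,
        ENNReal.mul_top (mul_ne_zero (ENNReal.inv_ne_zero.mpr hVtop) hI1.ne')] at hC01
      exact ENNReal.ofReal_ne_top (top_le_iff.mp hC01)
  · rintro ⟨hα1, hα2⟩
    set L := aniL a with hL_def
    have hL1 : 1 ≤ L := one_le_aniL
    have hL0 : 0 < L := aniL_pos
    have hα'1 : -s < α' := by
      have hu : (0:ℝ) < 1 / (p - 1) := by positivity
      have hinv : (1 / (p - 1)) * (p - 1) = 1 := by field_simp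
      rw [hα'_def, he]
      nlinarith [mul_lt_mul_of_pos_right hα2 hu]
    obtain ⟨K₁, hK₁, hbound₁⟩ := lintegral_aNorm_rpow_le hn ha hα1
    obtain ⟨K₂, hK₂, hbound₂⟩ := lintegral_aNorm_rpow_le hn ha hα'1
    set c₁ : ℝ := K₁ * (L * L) ^ (s + α) / 2 ^ n with hc₁_def
    set c₂ : ℝ := K₂ * (L * L) ^ (s + α') / 2 ^ n with hc₂_def
    have hc₁ : 0 < c₁ := by
      rw [hc₁_def]
      have := Real.rpow_pos_of_pos (mul_pos hL0 hL0) (s + α)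
      positivity
    have hc₂ : 0 < c₂ := by
      rw [hc₂_def]
      have := Real.rpow_pos_of_pos (mul_pos hL0 hL0) (s + α')
      positivity
    set B₁ : ℝ := c₁ * c₂ ^ (p - 1) with hB₁_def
    set B₂ : ℝ := L ^ |α| * (L ^ |α'|) ^ (p - 1) with hB₂_def
    refine ⟨max 2 (max B₁ B₂), lt_of_lt_of_le one_lt_two (le_max_left _ _),
      fun x t ht => ?_⟩
    rw [hrw x t]
    set V := volume (aniBox a x t) with hV_def
    have hVval : V = ENNReal.ofReal (2 ^ n * t ^ s) := volume_aniBox x ht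
    have hts : (0:ℝ) < t ^ s := Real.rpow_pos_of_pos ht s
    have hV0 : V ≠ 0 := by
      rw [hVval]
      simp only [ne_eq, ENNReal.ofReal_eq_zero, not_le]
      positivity
    have hVtop : V ≠ ⊤ := by rw [hVval]; exact ENNReal.ofReal_ne_top
    rcases le_or_gt (aNorm a x) (L * t) with hcase | hcase
    · -- near case
      set T : ℝ := L * (L * t) with hT_def
      have hT : 0 < T := by positivity
      have hsub : aniBox a x t ⊆ aniBox a 0 T := by
        intro y hy
        rw [mem_aniBox_zero_iff hn ha hT.le]
        exact aNorm_le_of_mem hn ha ht hcase (le_mul_of_one_le_left ht.le hL1) hy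
      have hTrw : ∀ γ : ℝ, T ^ (s + γ) = (L * L) ^ (s + γ) * t ^ (s + γ) := by
        intro γ
        rw [hT_def, show L * (L * t) = (L * L) * t by ring]
        exact Real.mul_rpow (by positivity) ht.le
      have hreal : ∀ (K γ : ℝ), K * T ^ (s + γ) / (2 ^ n * t ^ s)
          = (K * (L * L) ^ (s + γ) / 2 ^ n) * t ^ γ := by
        intro K γ
        rw [hTrw γ, Real.rpow_add ht s γ]
        have h2n : (0:ℝ) < 2 ^ n := by positivity
        field_simp
      -- first average
      have havg1 : V⁻¹ * (∫⁻ y in aniBox a x t, ENNReal.ofReal (aNorm a y ^ α))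
          ≤ ENNReal.ofReal (c₁ * t ^ α) := by
        calc V⁻¹ * (∫⁻ y in aniBox a x t, ENNReal.ofReal (aNorm a y ^ α))
            ≤ V⁻¹ * ENNReal.ofReal (K₁ * T ^ (s + α)) :=
              mul_le_mul_right ((lintegral_mono_set hsub).trans (hbound₁ T hT)) _
          _ = ENNReal.ofReal ((K₁ * T ^ (s + α)) / (2 ^ n * t ^ s)) := by
              rw [hVval, ENNReal.ofReal_div_of_pos (by positivity), div_eq_mul_inv,
                mul_comm]
          _ = ENNReal.ofReal (c₁ * t ^ α) := by rw [hreal K₁ α, hc₁_def]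
      have havg2 : V⁻¹ * (∫⁻ y in aniBox a x t, ENNReal.ofReal (aNorm a y ^ α'))
          ≤ ENNReal.ofReal (c₂ * t ^ α') := by
        calc V⁻¹ * (∫⁻ y in aniBox a x t, ENNReal.ofReal (aNorm a y ^ α'))
            ≤ V⁻¹ * ENNReal.ofReal (K₂ * T ^ (s + α')) :=
              mul_le_mul_right ((lintegral_mono_set hsub).trans (hbound₂ T hT)) _
          _ = ENNReal.ofReal ((K₂ * T ^ (s + α')) / (2 ^ n * t ^ s)) := by
              rw [hVval, ENNReal.ofReal_div_of_pos (by positivity), div_eq_mul_inv,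
                mul_comm]
          _ = ENNReal.ofReal (c₂ * t ^ α') := by rw [hreal K₂ α', hc₂_def]
      calc (V⁻¹ * ∫⁻ y in aniBox a x t, ENNReal.ofReal (aNorm a y ^ α)) *
            (V⁻¹ * ∫⁻ y in aniBox a x t, ENNReal.ofReal (aNorm a y ^ α')) ^ (p - 1)
          ≤ ENNReal.ofReal (c₁ * t ^ α) * ENNReal.ofReal (c₂ * t ^ α') ^ (p - 1) :=
            mul_le_mul' havg1 (ENNReal.rpow_le_rpow havg2 hp1.le)
        _ = ENNReal.ofReal (c₁ * t ^ α * (c₂ * t ^ α') ^ (p - 1)) := by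
            rw [ENNReal.ofReal_rpow_of_nonneg (by positivity) hp1.le,
              ← ENNReal.ofReal_mul (by positivity)]
        _ = ENNReal.ofReal B₁ := by
            congr 1
            rw [hB₁_def, Real.mul_rpow hc₂.le (Real.rpow_nonneg ht.le _),
              ← Real.rpow_mul ht.le]
            calc c₁ * t ^ α * (c₂ ^ (p - 1) * t ^ (α' * (p - 1)))
                = c₁ * c₂ ^ (p - 1) * (t ^ α * t ^ (α' * (p - 1))) := by ring
              _ = c₁ * c₂ ^ (p - 1) := by
                  rw [← Real.rpow_add ht, show α + α' * (p - 1) = 0 from hsum,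
                    Real.rpow_zero, mul_one]
        _ ≤ ENNReal.ofReal (max 2 (max B₁ B₂)) :=
            ENNReal.ofReal_le_ofReal ((le_max_left _ _).trans (le_max_right _ _))
    · -- far case
      have hρx : 0 < aNorm a x := lt_trans (by positivity) hcase
      have hbd : ∀ y ∈ aniBox a x t, 0 < aNorm a y ∧
          aNorm a x ≤ L * aNorm a y ∧ aNorm a y ≤ L * aNorm a x := by
        intro y hy
        obtain ⟨h1, h2⟩ := aNorm_le_of_far hn ha ht hcase hy
        refine ⟨?_, h1, h2⟩
        nlinarith
      have havg1 : V⁻¹ * (∫⁻ y in aniBox a x t, ENNReal.ofReal (aNorm a y ^ α))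
          ≤ ENNReal.ofReal (L ^ |α| * aNorm a x ^ α) := by
        refine avg_le_of_bound (measurableSet_aniBox _ _) hV0 hVtop ?_
        intro y hy
        obtain ⟨h0, h1, h2⟩ := hbd y hy
        exact rpow_far_bound hL1 hρx h0 h1 h2
      have havg2 : V⁻¹ * (∫⁻ y in aniBox a x t, ENNReal.ofReal (aNorm a y ^ α'))
          ≤ ENNReal.ofReal (L ^ |α'| * aNorm a x ^ α') := by
        refine avg_le_of_bound (measurableSet_aniBox _ _) hV0 hVtop ?_
        intro y hy
        obtain ⟨h0, h1, h2⟩ := hbd y hy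
        exact rpow_far_bound hL1 hρx h0 h1 h2
      calc (V⁻¹ * ∫⁻ y in aniBox a x t, ENNReal.ofReal (aNorm a y ^ α)) *
            (V⁻¹ * ∫⁻ y in aniBox a x t, ENNReal.ofReal (aNorm a y ^ α')) ^ (p - 1)
          ≤ ENNReal.ofReal (L ^ |α| * aNorm a x ^ α) *
              ENNReal.ofReal (L ^ |α'| * aNorm a x ^ α') ^ (p - 1) :=
            mul_le_mul' havg1 (ENNReal.rpow_le_rpow havg2 hp1.le)
        _ = ENNReal.ofReal (L ^ |α| * aNorm a x ^ α *
              (L ^ |α'| * aNorm a x ^ α') ^ (p - 1)) := by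
            rw [ENNReal.ofReal_rpow_of_nonneg
                (mul_nonneg (Real.rpow_nonneg hL0.le _) (Real.rpow_nonneg hρx.le _))
                hp1.le,
              ← ENNReal.ofReal_mul
                (mul_nonneg (Real.rpow_nonneg hL0.le _) (Real.rpow_nonneg hρx.le _))]
        _ = ENNReal.ofReal B₂ := by
            congr 1
            rw [hB₂_def,
              Real.mul_rpow (Real.rpow_nonneg hL0.le _) (Real.rpow_nonneg hρx.le _),
              ← Real.rpow_mul hρx.le]
            calc L ^ |α| * aNorm a x ^ α *
                  ((L ^ |α'|) ^ (p - 1) * aNorm a x ^ (α' * (p - 1)))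
                = L ^ |α| * (L ^ |α'|) ^ (p - 1) *
                    (aNorm a x ^ α * aNorm a x ^ (α' * (p - 1))) := by ring
              _ = L ^ |α| * (L ^ |α'|) ^ (p - 1) := by
                  rw [← Real.rpow_add hρx, show α + α' * (p - 1) = 0 from hsum,
                    Real.rpow_zero, mul_one]
        _ ≤ ENNReal.ofReal (max 2 (max B₁ B₂)) :=
            ENNReal.ofReal_le_ofReal ((le_max_right _ _).trans (le_max_right _ _))
end Main

/-- For `1 < p < ∞`, the anisotropic power weight `w(x) = |x|_a^α` is in the
anisotropic Muckenhoupt class `A_p` if and only if `-|a| < α < |a|(p-1)`,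
where `|a| = a₁ + ⋯ + aₙ`. -/
theorem power_weight_mem_Ap_iff
    {n : ℕ} (hn : 0 < n) (a : Fin n → ℝ) (ha : ∀ i, 0 < a i)
    (p : ℝ) (hp : 1 < p) (α : ℝ) :
    (∃ C : ℝ, 1 < C ∧ ∀ x t, 0 < t →
      ((volume (aniBox a x t))⁻¹ *
          ∫⁻ y in aniBox a x t, ENNReal.ofReal (aNorm a y ^ α)) *
        ((volume (aniBox a x t))⁻¹ *
          ∫⁻ y in aniBox a x t,
            ENNReal.ofReal ((aNorm a y ^ α) ^ (1 - p / (p - 1)))) ^ (p - 1)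
        ≤ ENNReal.ofReal C) ↔
      (-(∑ i, a i) < α ∧ α < (∑ i, a i) * (p - 1)) :=
  power_weight_mem_Ap_iff' hn ha p hp α
end
end

section
/- In dimension one, let −1/2 < α < 0, let w(x) = |x|^α, and let f(x) = χ_{(0,1)}(x)·|x|^{−1/2}. Then f belongs to the weighted Morrey space L_{1,κ}(w) with κ = (α + 1/2)/(α + 1); that is, sup_I w(I)^{−κ} ∫_I |f(x)| w(x)dx < ∞, the supremum over all bounded intervals I ⊂ ℝ. -/
open MeasureTheory ENNReal Set

noncomputable section

lemma aux_rpow_add_le (x y p : ℝ) (hx : 0 ≤ x) (hy : 0 ≤ y) (hp : 0 ≤ p) (hp1 : p ≤ 1) :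
    (x + y) ^ p ≤ x ^ p + y ^ p := by
  lift x to NNReal using hx
  lift y to NNReal using hy
  have h := NNReal.rpow_add_le_add_rpow x y hp hp1
  exact_mod_cast h

lemma aux_lint_rpow_Ioo (r a b : ℝ) (hr : -1 < r) (ha : 0 ≤ a) (hab : a ≤ b) :
    ∫⁻ x in Set.Ioo a b, ENNReal.ofReal (x ^ r)
      = ENNReal.ofReal ((b ^ (r + 1) - a ^ (r + 1)) / (r + 1)) := by
  have hint : IntervalIntegrable (fun x : ℝ => x ^ r) volume a b :=
    intervalIntegral.intervalIntegrable_rpow' hr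
  have h1 : IntegrableOn (fun x : ℝ => x ^ r) (Set.Ioo a b) volume :=
    ((intervalIntegrable_iff_integrableOn_Ioc_of_le hab).mp hint).mono_set
      Set.Ioo_subset_Ioc_self
  have hnn : 0 ≤ᵐ[volume.restrict (Set.Ioo a b)] fun x : ℝ => x ^ r := by
    filter_upwards [ae_restrict_mem measurableSet_Ioo] with x hx
    exact Real.rpow_nonneg (le_of_lt (lt_of_le_of_lt ha hx.1)) r
  rw [← MeasureTheory.ofReal_integral_eq_lintegral_ofReal h1 hnn]
  congr 1
  rw [← MeasureTheory.integral_Ioc_eq_integral_Ioo,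
    ← intervalIntegral.integral_of_le hab, integral_rpow (Or.inl hr)]

/-- In dimension one, for `-1/2 < α < 0`, the function
`f(x) = χ_{(0,1)}(x) |x|^{-1/2}` belongs to the weighted Morrey space
`L_{1,κ}(w)` with weight `w(x) = |x|^α` and `κ = (α + 1/2)/(α + 1)`:
the supremum over all bounded intervals `I` of
`w(I)^{-κ} ∫_I |f| w` is finite. -/
theorem power_function_mem_weighted_Morrey
    (α : ℝ) (hα₁ : -(1/2 : ℝ) < α) (hα₂ : α < 0) :
    (⨆ (u : ℝ) (v : ℝ) (_ : u < v),
        (∫⁻ x in Set.Ioo u v,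
            ENNReal.ofReal
              (|Set.indicator (Set.Ioo (0:ℝ) 1)
                  (fun y => |y| ^ (-(1/2 : ℝ))) x| * |x| ^ α)) /
          (∫⁻ x in Set.Ioo u v, ENNReal.ofReal (|x| ^ α)) ^
            ((α + 1/2) / (α + 1))) < ⊤ := by
  set κ : ℝ := (α + 1/2) / (α + 1) with hκdef
  have hα12 : (0:ℝ) < α + 1/2 := by linarith
  have hα1 : (0:ℝ) < α + 1 := by linarith
  have hκ0 : 0 ≤ κ := div_nonneg hα12.le hα1.le
  have hκ1 : κ ≤ 1 := by
    rw [hκdef, div_le_one hα1]; linarith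
  have hκmul : (α + 1) * κ = α + 1/2 := by
    rw [hκdef]; field_simp
  set C : ℝ := (α + 1) ^ κ / (α + 1/2) with hCdef
  refine lt_of_le_of_lt (iSup_le fun u => iSup_le fun v => iSup_le fun huv => ?_)
    (ENNReal.ofReal_lt_top (r := C))
  set a : ℝ := max u 0 with hadef
  set b : ℝ := min v 1 with hbdef
  have ha0 : 0 ≤ a := le_max_right u 0
  -- rewrite the numerator
  have hnum : (∫⁻ x in Set.Ioo u v,
      ENNReal.ofReal
        (|Set.indicator (Set.Ioo (0:ℝ) 1) (fun y => |y| ^ (-(1/2 : ℝ))) x| * |x| ^ α))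
      = ∫⁻ x in Set.Ioo a b, ENNReal.ofReal (x ^ (α - 1/2)) := by
    have : (fun x : ℝ => ENNReal.ofReal
        (|Set.indicator (Set.Ioo (0:ℝ) 1) (fun y => |y| ^ (-(1/2 : ℝ))) x| * |x| ^ α))
        = Set.indicator (Set.Ioo (0:ℝ) 1) (fun x => ENNReal.ofReal (x ^ (α - 1/2))) := by
      funext x
      by_cases hx : x ∈ Set.Ioo (0:ℝ) 1
      · rw [Set.indicator_of_mem hx, Set.indicator_of_mem hx]
        have hx0 : 0 < x := hx.1
        rw [abs_of_pos hx0, abs_of_nonneg (Real.rpow_nonneg hx0.le _),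
          ← Real.rpow_add hx0, show -(1/2:ℝ) + α = α - 1/2 by ring]
      · rw [Set.indicator_of_notMem hx, Set.indicator_of_notMem hx, abs_zero,
          zero_mul, ENNReal.ofReal_zero]
    rw [this, lintegral_indicator measurableSet_Ioo,
      Measure.restrict_restrict measurableSet_Ioo, Set.Ioo_inter_Ioo, max_comm, min_comm]
  rw [hnum]
  by_cases hab : b ≤ a
  · rw [Set.Ioo_eq_empty (by exact fun h => absurd hab (not_le.mpr h)),
      Measure.restrict_empty, lintegral_zero_measure, ENNReal.zero_div]
    exact zero_le
  push_neg at hab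
  have hb1 : b ≤ 1 := min_le_right v 1
  -- values of the two integrals
  have hnumval : ∫⁻ x in Set.Ioo a b, ENNReal.ofReal (x ^ (α - 1/2))
      = ENNReal.ofReal ((b ^ (α + 1/2) - a ^ (α + 1/2)) / (α + 1/2)) := by
    have h := aux_lint_rpow_Ioo (α - 1/2) a b (by linarith) ha0 hab.le
    rw [h, show α - 1/2 + 1 = α + 1/2 by ring]
  have hdenlow : ENNReal.ofReal ((b ^ (α + 1) - a ^ (α + 1)) / (α + 1))
      ≤ ∫⁻ x in Set.Ioo u v, ENNReal.ofReal (|x| ^ α) := by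
    have hsub : Set.Ioo a b ⊆ Set.Ioo u v := fun x hx =>
      ⟨lt_of_le_of_lt (le_max_left u 0) hx.1, lt_of_lt_of_le hx.2 (min_le_left v 1)⟩
    calc ENNReal.ofReal ((b ^ (α + 1) - a ^ (α + 1)) / (α + 1))
        = ∫⁻ x in Set.Ioo a b, ENNReal.ofReal (x ^ α) := by
          rw [aux_lint_rpow_Ioo α a b (by linarith) ha0 hab.le]
      _ = ∫⁻ x in Set.Ioo a b, ENNReal.ofReal (|x| ^ α) := by
          refine setLIntegral_congr_fun measurableSet_Ioo (fun x hx => ?_)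
          rw [abs_of_pos (lt_of_le_of_lt ha0 hx.1)]
      _ ≤ ∫⁻ x in Set.Ioo u v, ENNReal.ofReal (|x| ^ α) := lintegral_mono_set hsub
  -- real quantities
  set X : ℝ := b ^ (α + 1) with hXdef
  set Y : ℝ := a ^ (α + 1) with hYdef
  have hYX : Y < X := Real.rpow_lt_rpow ha0 hab hα1
  have hY0 : 0 ≤ Y := Real.rpow_nonneg ha0 _
  have hXY0 : 0 < X - Y := by linarith
  have hDval : 0 < (X - Y) / (α + 1) := div_pos hXY0 hα1
  -- key real inequality
  have hkey : b ^ (α + 1/2) - a ^ (α + 1/2) ≤ (X - Y) ^ κ := by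
    have hb0 : 0 ≤ b := le_trans ha0 hab.le
    have hbX : b ^ (α + 1/2) = X ^ κ := by
      rw [hXdef, ← Real.rpow_mul hb0, hκmul]
    have haY : a ^ (α + 1/2) = Y ^ κ := by
      rw [hYdef, ← Real.rpow_mul ha0, hκmul]
    rw [hbX, haY]
    have : X ^ κ ≤ (X - Y) ^ κ + Y ^ κ := by
      calc X ^ κ = ((X - Y) + Y) ^ κ := by ring_nf
        _ ≤ (X - Y) ^ κ + Y ^ κ := aux_rpow_add_le _ _ _ hXY0.le hY0 hκ0 hκ1
    linarith
  -- combine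
  rw [hnumval]
  calc ENNReal.ofReal ((b ^ (α + 1/2) - a ^ (α + 1/2)) / (α + 1/2)) /
        (∫⁻ x in Set.Ioo u v, ENNReal.ofReal (|x| ^ α)) ^ κ
      ≤ ENNReal.ofReal ((b ^ (α + 1/2) - a ^ (α + 1/2)) / (α + 1/2)) /
        (ENNReal.ofReal ((X - Y) / (α + 1))) ^ κ := by
        refine ENNReal.div_le_div le_rfl (ENNReal.rpow_le_rpow ?_ hκ0)
        exact hdenlow
    _ = ENNReal.ofReal (((b ^ (α + 1/2) - a ^ (α + 1/2)) / (α + 1/2)) /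
          ((X - Y) / (α + 1)) ^ κ) := by
        rw [ENNReal.ofReal_rpow_of_nonneg hDval.le hκ0,
          ← ENNReal.ofReal_div_of_pos (Real.rpow_pos_of_pos hDval κ)]
    _ ≤ ENNReal.ofReal C := by
        apply ENNReal.ofReal_le_ofReal
        have hZ : (0:ℝ) < (X - Y) ^ κ := Real.rpow_pos_of_pos hXY0 κ
        have h1 : ((X - Y) / (α + 1)) ^ κ = (X - Y) ^ κ / (α + 1) ^ κ :=
          Real.div_rpow hXY0.le hα1.le κ
        rw [h1]
        have hden : (0:ℝ) < (X - Y) ^ κ / (α + 1) ^ κ :=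
          div_pos hZ (Real.rpow_pos_of_pos hα1 κ)
        calc (b ^ (α + 1/2) - a ^ (α + 1/2)) / (α + 1/2) / ((X - Y) ^ κ / (α + 1) ^ κ)
            ≤ ((X - Y) ^ κ / (α + 1/2)) / ((X - Y) ^ κ / (α + 1) ^ κ) :=
              (div_le_div_iff_of_pos_right hden).mpr ((div_le_div_iff_of_pos_right hα12).mpr hkey)
          _ = C := by
              rw [hCdef, div_div_div_comm, div_self hZ.ne', one_div_div]
end
end
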